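/- arXiv:2107.10905 — 2 statements merged into one kernel-verified Lean document; each statement's English description precedes it below -/
import Mathlib

section
/- Special case: let A₁ be a compact selfadjoint operator on a real Hilbert space H (dim ≥ 3) with 0 in its numerical range, and A₂ a positive definite invertible operator. Then for any a₁, a₂ ∈ H and b₁, b₂ ∈ ℝ, the set {(⟨A₁x,x⟩+⟨x,a₁⟩+b₁, ⟨A₂x,x⟩+⟨x,a₂⟩+b₂) : x ∈ H} is convex and closed in ℝ². -/
open scoped RealInnerProductSpace
open Filter Topology

set_option linter.unusedSectionVars false
set_option linter.unusedVariables false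
set_option maxHeartbeats 1600000

namespace NICS

variable {H : Type*} [NormedAddCommGroup H] [InnerProductSpace ℝ H] [CompleteSpace H]

noncomputable def Q (T : H →L[ℝ] H) (a : H) (b : ℝ) (x : H) : ℝ :=
  ⟪T x, x⟫ + ⟪x, a⟫ + b

lemma inner_symm {T : H →L[ℝ] H} (hT : IsSelfAdjoint T) (x y : H) :
    ⟪T x, y⟫ = ⟪x, T y⟫ := hT.isSymmetric x y

lemma Q_expand {T : H →L[ℝ] H} (hT : IsSelfAdjoint T) (a : H) (b : ℝ) (z h : H) :
    Q T a b (z + h) = Q T a b z + (2 * ⟪T z, h⟫ + ⟪h, a⟫) + ⟪T h, h⟫ := by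
  have h1 : ⟪T h, z⟫ = ⟪T z, h⟫ := by
    rw [real_inner_comm, inner_symm hT]
  simp only [Q, map_add, inner_add_left, inner_add_right, h1]
  ring

lemma Q_cont (T : H →L[ℝ] H) (a : H) (b : ℝ) : Continuous (Q T a b) := by
  unfold Q
  exact (((T.continuous.inner continuous_id).add
    (continuous_id.inner continuous_const)).add continuous_const)

lemma Q_line {T : H →L[ℝ] H} (hT : IsSelfAdjoint T) (a : H) (b : ℝ) (z w : H) (t : ℝ) :
    Q T a b (z + t • w) = Q T a b z + t * (2 * ⟪T z, w⟫ + ⟪w, a⟫) + t ^ 2 * ⟪T w, w⟫ := by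
  rw [Q_expand hT]
  simp only [inner_smul_right, inner_smul_left, map_smul, RCLike.conj_to_real,
    real_inner_smul_left]
  ring

lemma Q_plane {T : H →L[ℝ] H} (hT : IsSelfAdjoint T) (a : H) (b : ℝ) (z w v : H) (t s : ℝ) :
    Q T a b (z + (t • w + s • v)) = Q T a b z + t * (2 * ⟪T z, w⟫ + ⟪w, a⟫)
      + s * (2 * ⟪T z, v⟫ + ⟪v, a⟫)
      + t ^ 2 * ⟪T w, w⟫ + 2 * t * s * ⟪T w, v⟫ + s ^ 2 * ⟪T v, v⟫ := by
  have hcross : ⟪T v, w⟫ = ⟪T w, v⟫ := by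
    rw [real_inner_comm, inner_symm hT]
  rw [Q_expand hT]
  simp only [map_add, map_smul, inner_add_left, inner_add_right, inner_smul_left,
    inner_smul_right, RCLike.conj_to_real, hcross]
  ring

lemma Q_reach {A₂ : H →L[ℝ] H} {δ : ℝ} (hδ : 0 < δ)
    (hA₂ : ∀ x : H, δ * ‖x‖ ^ 2 ≤ ⟪A₂ x, x⟫) (a : H) (b : ℝ) (M : ℝ) :
    ∃ r : ℝ, 0 ≤ r ∧ ∀ x : H, r ≤ ‖x‖ → M ≤ Q A₂ a b x := by
  refine ⟨max ((‖a‖ + 1)/δ) (max 0 (M - b)), le_max_of_le_right (le_max_left _ _), ?_⟩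
  intro x hx
  have h1 : (‖a‖ + 1)/δ ≤ ‖x‖ := le_trans (le_max_left _ _) hx
  have h2 : M - b ≤ ‖x‖ := le_trans (le_max_of_le_right (le_max_right _ _)) hx
  have h3 : ‖a‖ + 1 ≤ δ * ‖x‖ := by
    rw [div_le_iff₀ hδ] at h1; linarith [mul_comm δ ‖x‖]
  have h4 : ⟪x, a⟫ ≥ -(‖x‖ * ‖a‖) := by
    have := abs_real_inner_le_norm x a
    have := abs_le.mp this
    linarith [this.1]
  have h5 := hA₂ x
  have hx0 : 0 ≤ ‖x‖ := norm_nonneg x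
  have : δ * ‖x‖ ^ 2 - ‖x‖ * ‖a‖ ≥ ‖x‖ := by nlinarith
  simp only [Q]
  nlinarith

lemma Q_norm_bound {A₂ : H →L[ℝ] H} {δ : ℝ} (hδ : 0 < δ)
    (hA₂ : ∀ x : H, δ * ‖x‖ ^ 2 ≤ ⟪A₂ x, x⟫) (a : H) (b : ℝ) (C : ℝ) :
    ∃ R : ℝ, ∀ x : H, Q A₂ a b x ≤ C → ‖x‖ ≤ R := by
  obtain ⟨r, hr0, hr⟩ := Q_reach hδ hA₂ a b (C + 1)
  refine ⟨r, fun x hx => ?_⟩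
  by_contra h
  push_neg at h
  have := hr x h.le
  linarith

lemma Q_lower_bound {A₂ : H →L[ℝ] H} {δ : ℝ} (hδ : 0 < δ)
    (hA₂ : ∀ x : H, δ * ‖x‖ ^ 2 ≤ ⟪A₂ x, x⟫) (a : H) (b : ℝ) :
    ∀ x : H, b - ‖a‖ ^ 2 / (4 * δ) ≤ Q A₂ a b x := by
  intro x
  have h4 : ⟪x, a⟫ ≥ -(‖x‖ * ‖a‖) := by
    have := abs_le.mp (abs_real_inner_le_norm x a)
    linarith [this.1]
  have h5 := hA₂ x
  have hx0 : 0 ≤ ‖x‖ := norm_nonneg x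
  simp only [Q]
  have key : δ * ‖x‖ ^ 2 - ‖x‖ * ‖a‖ ≥ - (‖a‖ ^ 2 / (4 * δ)) := by
    rw [ge_iff_le, ← neg_div, div_le_iff₀ (by positivity : (0:ℝ) < 4*δ)]
    nlinarith [sq_nonneg (2*δ*‖x‖ - ‖a‖)]
  nlinarith

lemma ray_core (A₁ A₂ : H →L[ℝ] H) (a₁ a₂ : H) (b₁ b₂ : ℝ)
    (γ : ℝ → H) (hc : ContinuousOn γ (Set.Ici 0))
    (hf : ∀ s, 0 ≤ s → Q A₁ a₁ b₁ (γ s) = Q A₁ a₁ b₁ (γ 0))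
    (hg : ∀ M : ℝ, ∃ s, 0 ≤ s ∧ M ≤ Q A₂ a₂ b₂ (γ s))
    (v : ℝ) (hv : Q A₂ a₂ b₂ (γ 0) ≤ v) :
    ∃ z', Q A₁ a₁ b₁ z' = Q A₁ a₁ b₁ (γ 0) ∧ Q A₂ a₂ b₂ z' = v := by
  obtain ⟨s, hs0, hsM⟩ := hg v
  have hmem : v ∈ Set.Icc (Q A₂ a₂ b₂ (γ 0)) (Q A₂ a₂ b₂ (γ s)) := ⟨hv, hsM⟩
  have hcc : ContinuousOn (fun t => Q A₂ a₂ b₂ (γ t)) (Set.Icc 0 s) :=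
    ((Q_cont A₂ a₂ b₂).comp_continuousOn (hc.mono (Set.Icc_subset_Ici_self)))
  have ivt := intermediate_value_Icc hs0 hcc
  obtain ⟨t, ht, hteq⟩ := ivt hmem
  exact ⟨γ t, hf t ht.1, hteq⟩


/-- Travel along a curve `s ↦ z + t s • e + (σ s) • v₀` with `v₀ ⊥ e`. -/
lemma ray_aux {A₁ A₂ : H →L[ℝ] H} {δ : ℝ} (hδ : 0 < δ)
    (hA₂ : ∀ x : H, δ * ‖x‖ ^ 2 ≤ ⟪A₂ x, x⟫)
    {e v₀ : H} (hv₀ : v₀ ≠ 0) (hev : ⟪e, v₀⟫ = 0)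
    (a₁ a₂ : H) (b₁ b₂ : ℝ) (z : H) {σ : ℝ} (hσ : σ = 1 ∨ σ = -1)
    (t : ℝ → ℝ) (ht : ContinuousOn t (Set.Ici 0)) (ht0 : t 0 = 0)
    (hQ1 : ∀ s, 0 ≤ s → Q A₁ a₁ b₁ (z + (t s • e + (σ * s) • v₀)) = Q A₁ a₁ b₁ z)
    {v : ℝ} (hv : Q A₂ a₂ b₂ z ≤ v) :
    ∃ z', Q A₁ a₁ b₁ z' = Q A₁ a₁ b₁ z ∧ Q A₂ a₂ b₂ z' = v := by
  set γ : ℝ → H := fun s => z + (t s • e + (σ * s) • v₀) with hγ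
  have hγ0 : γ 0 = z := by simp [hγ, ht0]
  have hnv : 0 < ‖v₀‖ := norm_pos_iff.mpr hv₀
  have hcγ : ContinuousOn γ (Set.Ici 0) := by
    apply continuousOn_const.add
    exact (ht.smul continuousOn_const).add
      (((continuousOn_const.mul continuousOn_id).smul continuousOn_const))
  have hip : ∀ s : ℝ, ⟪γ s, v₀⟫ = ⟪z, v₀⟫ + (σ * s) * ‖v₀‖ ^ 2 := by
    intro s
    simp only [hγ, inner_add_left, real_inner_smul_left]
    rw [hev, real_inner_self_eq_norm_sq]
    ring
  have hg : ∀ M : ℝ, ∃ s, 0 ≤ s ∧ M ≤ Q A₂ a₂ b₂ (γ s) := by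
    intro M
    obtain ⟨r, hr0, hr⟩ := Q_reach hδ hA₂ a₂ b₂ M
    set s := max 0 ((r * ‖v₀‖ + |⟪z, v₀⟫|) / ‖v₀‖ ^ 2) with hs
    have hs0 : 0 ≤ s := le_max_left _ _
    refine ⟨s, hs0, hr _ ?_⟩
    have h2 : r * ‖v₀‖ + |⟪z, v₀⟫| ≤ s * ‖v₀‖ ^ 2 := by
      rw [← div_le_iff₀ (by positivity : (0:ℝ) < ‖v₀‖ ^ 2)]
      exact le_max_right _ _
    have habs : s * ‖v₀‖ ^ 2 - |⟪z, v₀⟫| ≤ |⟪γ s, v₀⟫| := by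
      rw [hip s]
      have h3 : |(σ * s) * ‖v₀‖ ^ 2| = s * ‖v₀‖ ^ 2 := by
        rcases hσ with h | h <;>
          simp [h, abs_mul, abs_of_nonneg hs0, abs_of_nonneg (sq_nonneg ‖v₀‖)]
      calc s * ‖v₀‖ ^ 2 - |⟪z, v₀⟫| = |(σ * s) * ‖v₀‖ ^ 2| - |⟪z, v₀⟫| := by rw [h3]
        _ ≤ |⟪z, v₀⟫ + (σ * s) * ‖v₀‖ ^ 2| := by
            have h := abs_add_le (⟪z, v₀⟫ + (σ * s) * ‖v₀‖ ^ 2) (-⟪z, v₀⟫)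
            rw [abs_neg] at h
            have he : ⟪z, v₀⟫ + (σ * s) * ‖v₀‖ ^ 2 + -⟪z, v₀⟫ = (σ * s) * ‖v₀‖ ^ 2 := by ring
            rw [he] at h
            linarith
    have hcs : |⟪γ s, v₀⟫| ≤ ‖γ s‖ * ‖v₀‖ := abs_real_inner_le_norm _ _
    have : r * ‖v₀‖ ≤ ‖γ s‖ * ‖v₀‖ := by linarith
    exact le_of_mul_le_mul_right this hnv
  have := ray_core A₁ A₂ a₁ a₂ b₁ b₂ γ hcγ
    (fun s hs => by rw [hγ0]; exact hQ1 s hs) hg v (by rwa [hγ0])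
  rwa [hγ0] at this

lemma ray {A₁ A₂ : H →L[ℝ] H} (hA₁s : IsSelfAdjoint A₁) {δ : ℝ} (hδ : 0 < δ)
    (hA₂ : ∀ x : H, δ * ‖x‖ ^ 2 ≤ ⟪A₂ x, x⟫)
    {e : H} (he : ‖e‖ = 1) (he0 : ⟪A₁ e, e⟫ = 0)
    (hv2 : ∃ u : H, u ≠ 0 ∧ ⟪e, u⟫ = 0)
    (a₁ a₂ : H) (b₁ b₂ : ℝ) (z : H) {v : ℝ} (hv : Q A₂ a₂ b₂ z ≤ v) :
    ∃ z', Q A₁ a₁ b₁ z' = Q A₁ a₁ b₁ z ∧ Q A₂ a₂ b₂ z' = v := by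
  set α : ℝ := 2 * ⟪A₁ z, e⟫ + ⟪e, a₁⟫ with hα
  by_cases hα0 : α = 0
  · -- travel along e itself
    set γ : ℝ → H := fun s => z + s • e with hγ
    have hγ0 : γ 0 = z := by simp [hγ]
    have hf : ∀ s, 0 ≤ s → Q A₁ a₁ b₁ (γ s) = Q A₁ a₁ b₁ (γ 0) := by
      intro s _
      rw [hγ0]
      simp only [hγ]
      rw [Q_line hA₁s, ← hα, hα0, he0]
      ring
    have hg : ∀ M : ℝ, ∃ s, 0 ≤ s ∧ M ≤ Q A₂ a₂ b₂ (γ s) := by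
      intro M
      obtain ⟨r, hr0, hr⟩ := Q_reach hδ hA₂ a₂ b₂ M
      refine ⟨r + ‖z‖, by positivity, hr _ ?_⟩
      have h1 : ‖(r + ‖z‖) • e‖ = r + ‖z‖ := by
        rw [norm_smul, he]; simp [abs_of_nonneg (by positivity : (0:ℝ) ≤ r + ‖z‖)]
      have h2 : ‖(r + ‖z‖) • e‖ ≤ ‖γ (r + ‖z‖)‖ + ‖z‖ := by
        have : (r + ‖z‖) • e = γ (r + ‖z‖) - z := by simp [hγ]
        rw [this]
        exact norm_sub_le _ _
      linarith
    have := ray_core A₁ A₂ a₁ a₂ b₁ b₂ γ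
      (continuousOn_const.add (continuousOn_id.smul continuousOn_const)) hf hg v
      (by rwa [hγ0])
    rwa [hγ0] at this
  · by_cases hAe : A₁ e = 0
    · -- case 2b : A₁ e = 0 but α ≠ 0
      obtain ⟨v₀, hv₀, hev⟩ := hv2
      set t : ℝ → ℝ := fun s =>
        -(s * (2 * ⟪A₁ z, v₀⟫ + ⟪v₀, a₁⟫) + s ^ 2 * ⟪A₁ v₀, v₀⟫) / α with htdef
      have ht : ContinuousOn t (Set.Ici 0) := by
        apply ContinuousOn.div_const
        fun_prop
      have ht0 : t 0 = 0 := by simp [htdef]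
      refine ray_aux hδ hA₂ hv₀ hev a₁ a₂ b₁ b₂ z (Or.inl rfl) t ht ht0 ?_ hv
      intro s hs
      have h2 : ⟪A₁ e, v₀⟫ = 0 := by rw [hAe, inner_zero_left]
      have h4 : t s * (2 * ⟪A₁ z, e⟫ + ⟪e, a₁⟫) =
          -(s * (2 * ⟪A₁ z, v₀⟫ + ⟪v₀, a₁⟫) + s ^ 2 * ⟪A₁ v₀, v₀⟫) := by
        have h5 : t s * α =
            -(s * (2 * ⟪A₁ z, v₀⟫ + ⟪v₀, a₁⟫) + s ^ 2 * ⟪A₁ v₀, v₀⟫) := by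
          show -(s * (2 * ⟪A₁ z, v₀⟫ + ⟪v₀, a₁⟫) + s ^ 2 * ⟪A₁ v₀, v₀⟫) / α * α = _
          exact div_mul_cancel₀ _ hα0
        rw [hα] at h5
        exact h5
      rw [Q_plane hA₁s, he0, h2]
      linear_combination h4
    · -- case 2a : A₁ e ≠ 0
      have hκpos : (0:ℝ) < ⟪A₁ e, A₁ e⟫ := by
        rw [real_inner_self_eq_norm_sq]
        exact pow_pos (norm_pos_iff.mpr hAe) 2
      have hev : ⟪e, A₁ e⟫ = 0 := by rw [← inner_symm hA₁s, he0]
      set σ : ℝ := if 0 ≤ α then 1 else -1 with hσdef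
      have hσ : σ = 1 ∨ σ = -1 := by
        by_cases h : 0 ≤ α <;> simp [hσdef, h]
      have hdne : ∀ s : ℝ, 0 ≤ s → α + 2 * (σ * s) * ⟪A₁ e, A₁ e⟫ ≠ 0 := by
        intro s hs
        by_cases h : 0 ≤ α
        · have hσ1 : σ = 1 := by rw [hσdef, if_pos h]
          have hα' : 0 < α := lt_of_le_of_ne h (Ne.symm hα0)
          rw [hσ1]
          exact ne_of_gt (by nlinarith)
        · push_neg at h
          have hσ1 : σ = -1 := by rw [hσdef, if_neg (not_le.mpr h)]
          rw [hσ1]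
          exact ne_of_lt (by nlinarith)
      set t : ℝ → ℝ := fun s =>
        -((σ * s) * (2 * ⟪A₁ z, A₁ e⟫ + ⟪A₁ e, a₁⟫) + (σ * s) ^ 2 * ⟪A₁ (A₁ e), A₁ e⟫) /
          (α + 2 * (σ * s) * ⟪A₁ e, A₁ e⟫) with htdef
      have ht : ContinuousOn t (Set.Ici 0) := by
        apply ContinuousOn.div
        · fun_prop
        · fun_prop
        · exact fun s hs => hdne s hs
      have ht0 : t 0 = 0 := by simp [htdef]
      refine ray_aux hδ hA₂ hAe hev a₁ a₂ b₁ b₂ z hσ t ht ht0 ?_ hv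
      intro s hs
      have h5 : t s * (α + 2 * (σ * s) * ⟪A₁ e, A₁ e⟫) =
          -((σ * s) * (2 * ⟪A₁ z, A₁ e⟫ + ⟪A₁ e, a₁⟫)
            + (σ * s) ^ 2 * ⟪A₁ (A₁ e), A₁ e⟫) := by
        show -((σ * s) * (2 * ⟪A₁ z, A₁ e⟫ + ⟪A₁ e, a₁⟫)
            + (σ * s) ^ 2 * ⟪A₁ (A₁ e), A₁ e⟫) /
          (α + 2 * (σ * s) * ⟪A₁ e, A₁ e⟫) * (α + 2 * (σ * s) * ⟪A₁ e, A₁ e⟫) = _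
        exact div_mul_cancel₀ _ (hdne s hs)
      rw [hα] at h5
      rw [Q_plane hA₁s, he0]
      linear_combination h5


lemma isUnit_of_coercive {B : H →L[ℝ] H} (hB : IsSelfAdjoint B) {ε : ℝ} (hε : 0 < ε)
    (hc : ∀ x : H, ε * ‖x‖ ^ 2 ≤ ⟪B x, x⟫) : IsUnit B := by
  have hlow : ∀ x : H, ε * ‖x‖ ≤ ‖B x‖ := by
    intro x
    rcases eq_or_ne x 0 with h | h
    · simp [h]
    · have hx : 0 < ‖x‖ := norm_pos_iff.mpr h
      have h1 := hc x
      have h2 : ⟪B x, x⟫ ≤ ‖B x‖ * ‖x‖ := real_inner_le_norm _ _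
      have h3 : ε * ‖x‖ * ‖x‖ ≤ ‖B x‖ * ‖x‖ := by nlinarith
      exact le_of_mul_le_mul_right h3 hx
  have hzero : ∀ x : H, B x = 0 → x = 0 := by
    intro x hx
    have h := hlow x
    rw [hx, norm_zero] at h
    have hn : ‖x‖ = 0 := by nlinarith [norm_nonneg x]
    simpa using hn
  have hker : LinearMap.ker (B : H →ₗ[ℝ] H) = ⊥ := by
    rw [LinearMap.ker_eq_bot']
    intro x hx
    exact hzero x hx
  have hanti : AntilipschitzWith (⟨ε, hε.le⟩ : NNReal)⁻¹ B := by
    apply ContinuousLinearMap.antilipschitz_of_bound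
    intro x
    show ‖x‖ ≤ ε⁻¹ * ‖B x‖
    rw [inv_mul_eq_div, le_div_iff₀ hε]
    linarith [hlow x]
  have hclosed : IsClosed (Set.range (B : H → H)) :=
    hanti.isClosed_range B.uniformContinuous
  have hclosed' : IsClosed ((LinearMap.range (B : H →ₗ[ℝ] H) : Submodule ℝ H) : Set H) := by
    have hs : ((LinearMap.range (B : H →ₗ[ℝ] H) : Submodule ℝ H) : Set H) = Set.range (⇑B) := by
      ext y; simp [LinearMap.mem_range]
    rwa [hs]
  haveI : CompleteSpace (LinearMap.range (B : H →ₗ[ℝ] H) : Submodule ℝ H) := hclosed'.completeSpace_coe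
  have horth : (LinearMap.range (B : H →ₗ[ℝ] H) : Submodule ℝ H)ᗮ = ⊥ := by
    rw [Submodule.eq_bot_iff]
    intro y hy
    rw [Submodule.mem_orthogonal] at hy
    have h1 : ⟪B y, y⟫ = 0 := hy (B y) (LinearMap.mem_range_self _ y)
    have h2 := hc y
    have : ‖y‖ ^ 2 ≤ 0 := by nlinarith
    have : ‖y‖ = 0 := by nlinarith [sq_nonneg ‖y‖, norm_nonneg y]
    simpa [norm_eq_zero] using this
  have hrange : LinearMap.range (B : H →ₗ[ℝ] H) = ⊤ := Submodule.orthogonal_eq_bot_iff.mp horth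
  let e := ContinuousLinearEquiv.ofBijective B hker hrange
  refine ⟨⟨B, e.symm, ?_, ?_⟩, rfl⟩
  · ext x
    simp only [ContinuousLinearMap.mul_apply, ContinuousLinearMap.one_apply,
      ContinuousLinearMap.coe_coe]
    exact ContinuousLinearEquiv.ofBijective_apply_symm_apply B hker hrange x
  · ext x
    simp only [ContinuousLinearMap.mul_apply, ContinuousLinearMap.one_apply,
      ContinuousLinearMap.coe_coe]
    exact ContinuousLinearEquiv.ofBijective_symm_apply_apply B hker hrange x

lemma Q_sub_eq (A₁ A₂ : H →L[ℝ] H) (a₁ a₂ : H) (b₁ b₂ : ℝ) (ℓ : ℝ) (x : H) :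
    Q A₂ a₂ b₂ x - ℓ * Q A₁ a₁ b₁ x
      = Q (A₂ - ℓ • A₁) (a₂ - ℓ • a₁) (b₂ - ℓ * b₁) x := by
  simp only [Q, ContinuousLinearMap.sub_apply, ContinuousLinearMap.smul_apply,
    inner_sub_left, inner_sub_right, real_inner_smul_left, real_inner_smul_right]
  ring

lemma min_of_crit {B : H →L[ℝ] H} (hB : IsSelfAdjoint B)
    (hpsd : ∀ x : H, 0 ≤ ⟪B x, x⟫) {c : H} (b : ℝ) {z₀ : H}
    (hcrit : B z₀ = (-(2⁻¹ : ℝ)) • c) :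
    ∀ w : H, Q B c b z₀ ≤ Q B c b w := by
  intro w
  have hw : w = z₀ + (w - z₀) := by abel
  rw [hw, Q_expand hB]
  have h1 : 2 * ⟪B z₀, w - z₀⟫ + ⟪w - z₀, c⟫ = 0 := by
    rw [hcrit, real_inner_smul_left, real_inner_comm (w - z₀) c]
    ring
  have h2 := hpsd (w - z₀)
  linarith

noncomputable def zmin (A₁ A₂ : H →L[ℝ] H) (a₁ a₂ : H) (ℓ : ℝ) : H :=
  Ring.inverse (A₂ - ℓ • A₁) ((-(2⁻¹ : ℝ)) • (a₂ - ℓ • a₁))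

lemma zmin_crit {A₁ A₂ : H →L[ℝ] H} {a₁ a₂ : H} {ℓ : ℝ}
    (hu : IsUnit (A₂ - ℓ • A₁)) :
    (A₂ - ℓ • A₁) (zmin A₁ A₂ a₁ a₂ ℓ) = (-(2⁻¹ : ℝ)) • (a₂ - ℓ • a₁) := by
  have h := Ring.mul_inverse_cancel _ hu
  have h2 : ((A₂ - ℓ • A₁) * Ring.inverse (A₂ - ℓ • A₁)) ((-(2⁻¹ : ℝ)) • (a₂ - ℓ • a₁))
      = (-(2⁻¹ : ℝ)) • (a₂ - ℓ • a₁) := by rw [h]; simp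
  rw [ContinuousLinearMap.mul_apply] at h2
  exact h2

lemma selfadj_sub {A₁ A₂ : H →L[ℝ] H} (hA₁s : IsSelfAdjoint A₁)
    (hA₂s : IsSelfAdjoint A₂) (ℓ : ℝ) : IsSelfAdjoint (A₂ - ℓ • A₁) :=
  hA₂s.sub (IsSelfAdjoint.smul (star_trivial ℓ) hA₁s)

lemma zmin_isMin {A₁ A₂ : H →L[ℝ] H} (hA₁s : IsSelfAdjoint A₁)
    (hA₂s : IsSelfAdjoint A₂) {a₁ a₂ : H} {b₁ b₂ : ℝ} {ℓ ε : ℝ} (hε : 0 < ε)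
    (hco : ∀ x : H, ε * ‖x‖ ^ 2 ≤ ⟪(A₂ - ℓ • A₁) x, x⟫) :
    ∀ w : H, Q A₂ a₂ b₂ (zmin A₁ A₂ a₁ a₂ ℓ) - ℓ * Q A₁ a₁ b₁ (zmin A₁ A₂ a₁ a₂ ℓ)
      ≤ Q A₂ a₂ b₂ w - ℓ * Q A₁ a₁ b₁ w := by
  intro w
  rw [Q_sub_eq, Q_sub_eq]
  have hBs := selfadj_sub hA₁s hA₂s (ℓ := ℓ)
  have hpsd : ∀ x : H, 0 ≤ ⟪(A₂ - ℓ • A₁) x, x⟫ := fun x =>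
    le_trans (by positivity) (hco x)
  exact min_of_crit hBs hpsd _ (zmin_crit (isUnit_of_coercive hBs hε hco)) w

lemma zmin_contOn (A₁ A₂ : H →L[ℝ] H) (a₁ a₂ : H) :
    ContinuousOn (zmin A₁ A₂ a₁ a₂)
      {ℓ : ℝ | IsUnit (A₂ - ℓ • A₁)} := by
  apply continuousOn_of_forall_continuousAt
  intro ℓ hℓ
  have hBc : Continuous (fun ℓ : ℝ => A₂ - ℓ • A₁) :=
    continuous_const.sub (continuous_id.smul continuous_const)
  obtain ⟨u, hu⟩ := hℓ
  have h1 : ContinuousAt (fun ℓ : ℝ => Ring.inverse (A₂ - ℓ • A₁)) ℓ := by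
    have hcb : ContinuousAt (Ring.inverse : (H →L[ℝ] H) → (H →L[ℝ] H)) (A₂ - ℓ • A₁) := by
      rw [← hu]
      exact NormedRing.inverse_continuousAt u
    exact ContinuousAt.comp (g := Ring.inverse) (f := fun ℓ : ℝ => A₂ - ℓ • A₁) hcb hBc.continuousAt
  have h2 : ContinuousAt (fun ℓ : ℝ => (-(2⁻¹ : ℝ)) • (a₂ - ℓ • a₁)) ℓ := by fun_prop
  exact (isBoundedBilinearMap_apply.continuous.continuousAt).comp (h1.prodMk h2)


lemma weak_limit {ι : Type*} (U : Ultrafilter ι) (x : ι → H) {C : ℝ}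
    (hC : ∀ᶠ i in (U : Filter ι), ‖x i‖ ≤ C)
    {A : H →L[ℝ] H} (hAs : IsSelfAdjoint A) (hAc : IsCompactOperator (A : H → H)) :
    ∃ xb : H, (∀ y : H, Tendsto (fun i => ⟪x i, y⟫) (U : Filter ι) (𝓝 ⟪xb, y⟫)) ∧
      Tendsto (fun i => ⟪A (x i), x i⟫) (U : Filter ι) (𝓝 ⟪A xb, xb⟫) := by
  set C' : ℝ := max C 0 with hC'def
  have hC0 : 0 ≤ C' := le_max_right _ _
  have hC' : ∀ᶠ i in (U : Filter ι), ‖x i‖ ≤ C' := hC.mono fun i hi =>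
    le_trans hi (le_max_left _ _)
  -- the weak limit functional
  have key : ∀ y : H, ∃ r : ℝ, Tendsto (fun i => ⟪x i, y⟫) (U : Filter ι) (𝓝 r) := by
    intro y
    have hb : ∀ᶠ i in (U : Filter ι),
        (⟪x i, y⟫ : ℝ) ∈ Set.Icc (-(C' * ‖y‖)) (C' * ‖y‖) := by
      refine hC'.mono fun i hi => ?_
      have h1 : |⟪x i, y⟫| ≤ ‖x i‖ * ‖y‖ := abs_real_inner_le_norm _ _
      have h2 : ‖x i‖ * ‖y‖ ≤ C' * ‖y‖ := by
        apply mul_le_mul_of_nonneg_right hi (norm_nonneg y)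
      rw [abs_le] at h1
      constructor <;> [linarith [h1.1]; linarith [h1.2]]
    have hle : (Ultrafilter.map (fun i => (⟪x i, y⟫ : ℝ)) U : Filter ℝ)
        ≤ 𝓟 (Set.Icc (-(C' * ‖y‖)) (C' * ‖y‖)) := by
      rw [Ultrafilter.coe_map, le_principal_iff, mem_map]
      exact hb
    obtain ⟨r, _, hr⟩ := (isCompact_Icc).ultrafilter_le_nhds _ hle
    refine ⟨r, ?_⟩
    rwa [Ultrafilter.coe_map] at hr
  choose L hL using key
  have hadd : ∀ y z : H, L (y + z) = L y + L z := by
    intro y z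
    exact tendsto_nhds_unique (hL (y + z))
      (Tendsto.congr (fun i => (inner_add_right (x i) y z).symm) ((hL y).add (hL z)))
  have hsmul : ∀ (c : ℝ) (y : H), L (c • y) = c * L y := by
    intro c y
    exact tendsto_nhds_unique (hL (c • y))
      (Tendsto.congr (fun i => (real_inner_smul_right (x i) y c).symm) ((hL y).const_mul c))
  have hbound : ∀ y : H, ‖L y‖ ≤ C' * ‖y‖ := by
    intro y
    have h1 : Tendsto (fun i => |⟪x i, y⟫|) (U : Filter ι) (𝓝 |L y|) := (hL y).abs
    have h2 : ∀ᶠ i in (U : Filter ι), |⟪x i, y⟫| ≤ C' * ‖y‖ := by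
      refine hC'.mono fun i hi => ?_
      have := abs_real_inner_le_norm (x i) y
      nlinarith [norm_nonneg y]
    rw [Real.norm_eq_abs]
    exact le_of_tendsto h1 h2
  let Lm : H →ₗ[ℝ] ℝ :=
    { toFun := L
      map_add' := hadd
      map_smul' := hsmul }
  let F : H →L[ℝ] ℝ := LinearMap.mkContinuous Lm C' hbound
  set xb : H := (InnerProductSpace.toDual ℝ H).symm F with hxbdef
  have hxb : ∀ y : H, ⟪xb, y⟫ = L y := by
    intro y
    rw [hxbdef]
    exact InnerProductSpace.toDual_symm_apply
  have part1 : ∀ y : H, Tendsto (fun i => ⟪x i, y⟫) (U : Filter ι) (𝓝 ⟪xb, y⟫) := by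
    intro y
    rw [hxb y]
    exact hL y
  -- compactness part
  obtain ⟨K, hK, hKs⟩ := hAc.image_closedBall_subset_compact (𝕜₁ := ℝ)
    (f := (A : H →ₗ[ℝ] H)) (C' + 1)
  have hev : ∀ᶠ i in (U : Filter ι), A (x i) ∈ K := by
    refine hC'.mono fun i hi => ?_
    refine hKs ⟨x i, ?_, rfl⟩
    rw [Metric.mem_closedBall, dist_zero_right]
    linarith
  have hle2 : (Ultrafilter.map (fun i => A (x i)) U : Filter H) ≤ 𝓟 K := by
    rw [Ultrafilter.coe_map, le_principal_iff, mem_map]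
    exact hev
  obtain ⟨q, _, hq⟩ := hK.ultrafilter_le_nhds _ hle2
  rw [Ultrafilter.coe_map] at hq
  have hqt : Tendsto (fun i => A (x i)) (U : Filter ι) (𝓝 q) := hq
  have hqA : q = A xb := by
    apply ext_inner_left ℝ
    intro v
    have h1 : Tendsto (fun i => ⟪v, A (x i)⟫) (U : Filter ι) (𝓝 ⟪v, q⟫) :=
      tendsto_const_nhds.inner hqt
    have h2 : Tendsto (fun i => ⟪v, A (x i)⟫) (U : Filter ι) (𝓝 ⟪v, A xb⟫) := by
      have he : ∀ i, ⟪v, A (x i)⟫ = ⟪x i, A v⟫ := by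
        intro i
        rw [← inner_symm hAs v (x i), real_inner_comm]
      have h3 : Tendsto (fun i => ⟪x i, A v⟫) (U : Filter ι) (𝓝 ⟪xb, A v⟫) := part1 (A v)
      have h4 : ⟪xb, A v⟫ = ⟪v, A xb⟫ := by
        rw [← inner_symm hAs v xb, real_inner_comm]
      rw [← h4]
      exact Tendsto.congr (fun i => (he i).symm) h3
    exact tendsto_nhds_unique h1 h2
  refine ⟨xb, part1, ?_⟩
  have hsplit : ∀ i, ⟪A (x i), x i⟫ = ⟪A (x i) - q, x i⟫ + ⟪q, x i⟫ := by
    intro i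
    rw [inner_sub_left]
    ring
  have h5 : Tendsto (fun i => ⟪A (x i) - q, x i⟫) (U : Filter ι) (𝓝 0) := by
    have hbnd : ∀ᶠ i in (U : Filter ι),
        ‖(⟪A (x i) - q, x i⟫ : ℝ)‖ ≤ ‖A (x i) - q‖ * C' := by
      refine (hC'.mono fun i hi => ?_)
      have h6 : |⟪A (x i) - q, x i⟫| ≤ ‖A (x i) - q‖ * ‖x i‖ := abs_real_inner_le_norm _ _
      rw [Real.norm_eq_abs]
      calc |⟪A (x i) - q, x i⟫| ≤ ‖A (x i) - q‖ * ‖x i‖ := h6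
        _ ≤ ‖A (x i) - q‖ * C' := mul_le_mul_of_nonneg_left hi (norm_nonneg _)
    have h7 : Tendsto (fun i => ‖A (x i) - q‖) (U : Filter ι) (𝓝 0) :=
      tendsto_iff_norm_sub_tendsto_zero.mp hqt
    have hprod : Tendsto (fun i => ‖A (x i) - q‖ * C') (U : Filter ι) (𝓝 0) := by
      simpa using h7.mul_const C'
    exact squeeze_zero_norm' hbnd hprod
  have h8 : Tendsto (fun i => ⟪q, x i⟫) (U : Filter ι) (𝓝 ⟪q, xb⟫) := by
    have h9 := part1 q
    have he : ∀ i, (⟪x i, q⟫ : ℝ) = ⟪q, x i⟫ := fun i => real_inner_comm _ _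
    rw [real_inner_comm xb q]
    exact Tendsto.congr he h9
  have h10 := h5.add h8
  rw [zero_add] at h10
  have h11 : ⟪q, xb⟫ = ⟪A xb, xb⟫ := by rw [hqA]
  rw [h11] at h10
  exact Tendsto.congr (fun i => (hsplit i).symm) h10


/-- The set of `ℓ` where `A₂ - ℓ • A₁` is uniformly positive. -/
def coer (A₁ A₂ : H →L[ℝ] H) (ℓ : ℝ) : Prop :=
  ∃ ε : ℝ, 0 < ε ∧ ∀ x : H, ε * ‖x‖ ^ 2 ≤ ⟪(A₂ - ℓ • A₁) x, x⟫

lemma B_inner (A₁ A₂ : H →L[ℝ] H) (ℓ : ℝ) (w : H) :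
    ⟪(A₂ - ℓ • A₁) w, w⟫ = ⟪A₂ w, w⟫ - ℓ * ⟪A₁ w, w⟫ := by
  simp only [ContinuousLinearMap.sub_apply, ContinuousLinearMap.smul_apply,
    inner_sub_left, real_inner_smul_left]

lemma coer_zero {A₁ A₂ : H →L[ℝ] H} {δ : ℝ} (hδ : 0 < δ)
    (hA₂ : ∀ x : H, δ * ‖x‖ ^ 2 ≤ ⟪A₂ x, x⟫) : coer A₁ A₂ 0 := by
  refine ⟨δ, hδ, fun x => ?_⟩
  rw [B_inner]
  simpa using hA₂ x

lemma coer_combo {A₁ A₂ : H →L[ℝ] H} {ℓ₁ ℓ₂ s t : ℝ} (h₁ : coer A₁ A₂ ℓ₁)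
    (h₂ : coer A₁ A₂ ℓ₂) (hs : 0 ≤ s) (ht : 0 ≤ t) (hst : s + t = 1) :
    coer A₁ A₂ (s * ℓ₁ + t * ℓ₂) := by
  obtain ⟨ε₁, hε₁, hc₁⟩ := h₁
  obtain ⟨ε₂, hε₂, hc₂⟩ := h₂
  refine ⟨min ε₁ ε₂, lt_min hε₁ hε₂, fun x => ?_⟩
  have e₁ := hc₁ x
  have e₂ := hc₂ x
  rw [B_inner] at e₁ e₂ ⊢
  have hmin : min ε₁ ε₂ ≤ s * ε₁ + t * ε₂ := by
    nlinarith [min_le_left ε₁ ε₂, min_le_right ε₁ ε₂]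
  have m1 := mul_le_mul_of_nonneg_left e₁ hs
  have m2 := mul_le_mul_of_nonneg_left e₂ ht
  have m3 := mul_le_mul_of_nonneg_right hmin (sq_nonneg ‖x‖)
  have hφ2 : s * ⟪A₂ x, x⟫ + t * ⟪A₂ x, x⟫ = ⟪A₂ x, x⟫ := by
    rw [← add_mul, hst, one_mul]
  nlinarith [m1, m2, m3, hφ2]

lemma coer_perturb {A₁ A₂ : H →L[ℝ] H} {ℓ ε : ℝ} (hε : 0 < ε)
    (hc : ∀ x : H, ε * ‖x‖ ^ 2 ≤ ⟪(A₂ - ℓ • A₁) x, x⟫) {ℓ' : ℝ}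
    (h : |ℓ' - ℓ| ≤ ε / (2 * (‖A₁‖ + 1))) : coer A₁ A₂ ℓ' := by
  refine ⟨ε/2, by positivity, fun x => ?_⟩
  have e₁ := hc x
  rw [B_inner] at e₁ ⊢
  have hb : |⟪A₁ x, x⟫| ≤ ‖A₁‖ * ‖x‖ ^ 2 := by
    calc |⟪A₁ x, x⟫| ≤ ‖A₁ x‖ * ‖x‖ := abs_real_inner_le_norm _ _
      _ ≤ ‖A₁‖ * ‖x‖ * ‖x‖ := by
          apply mul_le_mul_of_nonneg_right (A₁.le_opNorm x) (norm_nonneg x)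
      _ = ‖A₁‖ * ‖x‖ ^ 2 := by ring
  have hA₁n : (0:ℝ) ≤ ‖A₁‖ := norm_nonneg _
  have habs := abs_le.mp h
  have hd : ε / (2 * (‖A₁‖ + 1)) * (‖A₁‖ + 1) = ε / 2 := by
    field_simp
  have habs2 := abs_le.mp hb
  nlinarith [sq_nonneg ‖x‖, mul_le_mul_of_nonneg_right habs.2 (sq_nonneg ‖x‖),
    abs_nonneg (ℓ' - ℓ), mul_le_mul_of_nonneg_left hb (abs_nonneg (ℓ' - ℓ)),
    abs_mul (ℓ' - ℓ) (⟪A₁ x, x⟫), neg_abs_le ((ℓ' - ℓ) * ⟪A₁ x, x⟫),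
    mul_le_mul_of_nonneg_right habs.2 (mul_nonneg hA₁n (sq_nonneg ‖x‖))]

lemma coer_of_unit {B : H →L[ℝ] H} {c : ℝ}
    (h : ∀ w : H, ‖w‖ = 1 → c ≤ ⟪B w, w⟫) :
    ∀ x : H, c * ‖x‖ ^ 2 ≤ ⟪B x, x⟫ := by
  intro x
  rcases eq_or_ne x 0 with rfl | hx
  · simp
  · have hn : 0 < ‖x‖ := norm_pos_iff.mpr hx
    have hu : ‖‖x‖⁻¹ • x‖ = 1 := by
      rw [norm_smul, norm_inv, norm_norm]
      field_simp
    have h1 := h (‖x‖⁻¹ • x) hu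
    rw [map_smul, real_inner_smul_left, real_inner_smul_right] at h1
    have h3 := mul_le_mul_of_nonneg_left h1 (le_of_lt (by positivity : (0:ℝ) < ‖x‖^2))
    have h4 : ‖x‖^2 * (‖x‖⁻¹ * (‖x‖⁻¹ * ⟪B x, x⟫)) = ⟪B x, x⟫ := by
      have hne : ‖x‖ ≠ 0 := ne_of_gt hn
      field_simp
    rw [h4] at h3
    linarith

theorem step1_blocked {A₁ A₂ : H →L[ℝ] H} (hA₁s : IsSelfAdjoint A₁)
    (hA₂s : IsSelfAdjoint A₂) (hA₁c : IsCompactOperator (A₁ : H → H))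
    {δ : ℝ} (hδ : 0 < δ) (hA₂ : ∀ x : H, δ * ‖x‖ ^ 2 ≤ ⟪A₂ x, x⟫)
    (a₁ a₂ : H) (b₁ b₂ : ℝ) (ustar : ℝ) (q : H) (hq : ustar < Q A₁ a₁ b₁ q)
    (hblock : ∀ ℓ : ℝ, coer A₁ A₂ ℓ → Q A₁ a₁ b₁ (zmin A₁ A₂ a₁ a₂ ℓ) < ustar) :
    ∃ (z : H) (ℓ : ℝ), Q A₁ a₁ b₁ z = ustar ∧
      ∀ w : H, Q A₂ a₂ b₂ z - ℓ * Q A₁ a₁ b₁ z ≤ Q A₂ a₂ b₂ w - ℓ * Q A₁ a₁ b₁ w := by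
  have hgmin := Q_lower_bound hδ hA₂ a₂ b₂
  set gmin : ℝ := b₂ - ‖a₂‖ ^ 2 / (4 * δ) with hgmindef
  -- there is a positive ℓ₀ which is not coercive
  have hnotall : ∃ ℓ₀ : ℝ, 0 < ℓ₀ ∧ ¬ coer A₁ A₂ ℓ₀ := by
    by_contra hcon
    push_neg at hcon
    set lb : ℝ := max 1 ((Q A₂ a₂ b₂ q - gmin) / (Q A₁ a₁ b₁ q - ustar)) with hlbdef
    have hlb1 : (1:ℝ) ≤ lb := le_max_left _ _
    have hlbpos : 0 < lb := lt_of_lt_of_le one_pos hlb1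
    have hco := hcon lb hlbpos
    obtain ⟨ε, hε, hcoe⟩ := hco
    have hmin := zmin_isMin hA₁s hA₂s (a₁ := a₁) (a₂ := a₂) (b₁ := b₁) (b₂ := b₂) hε hcoe q
    have hu := hblock lb ⟨ε, hε, hcoe⟩
    set z := zmin A₁ A₂ a₁ a₂ lb
    have h1 : gmin ≤ Q A₂ a₂ b₂ z := hgmin z
    have h2 : lb * (Q A₁ a₁ b₁ q - ustar) ≤ Q A₂ a₂ b₂ q - gmin := by nlinarith
    have h3 : (Q A₂ a₂ b₂ q - gmin) / (Q A₁ a₁ b₁ q - ustar) ≤ lb := le_max_right _ _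
    rw [div_le_iff₀ (by linarith)] at h3
    nlinarith
  obtain ⟨ℓ₀, hℓ₀pos, hℓ₀⟩ := hnotall
  -- the sup of the coercive interval
  set S : Set ℝ := {ℓ : ℝ | 0 ≤ ℓ ∧ coer A₁ A₂ ℓ} with hSdef
  have hS0 : (0:ℝ) ∈ S := ⟨le_refl 0, coer_zero hδ hA₂⟩
  have hSne : S.Nonempty := ⟨0, hS0⟩
  have hcombo0 : ∀ m ∈ S, ∀ ℓ, 0 ≤ ℓ → ℓ ≤ m → coer A₁ A₂ ℓ := by
    intro m hm ℓ hℓ0 hℓm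
    rcases eq_or_lt_of_le hℓm with rfl | hlt
    · exact hm.2
    rcases eq_or_lt_of_le hℓ0 with rfl | hℓpos
    · exact coer_zero hδ hA₂
    have hmpos : 0 < m := lt_trans hℓpos hlt
    have heq : ℓ = (1 - ℓ/m) * 0 + (ℓ/m) * m := by field_simp; ring
    rw [heq]
    apply coer_combo (coer_zero hδ hA₂) hm.2
    · have : ℓ/m ≤ 1 := by rw [div_le_one hmpos]; linarith
      linarith
    · positivity
    · ring
  have hSbdd : BddAbove S := by
    refine ⟨ℓ₀, fun m hm => ?_⟩
    by_contra hc
    push_neg at hc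
    exact hℓ₀ (hcombo0 m hm ℓ₀ hℓ₀pos.le hc.le)
  set lp : ℝ := sSup S with hlpdef
  have hlp0 : (0:ℝ) ≤ lp := le_csSup hSbdd hS0
  -- lp is positive
  have hlppos : 0 < lp := by
    obtain ⟨ε₀, hε₀, hc₀⟩ := coer_zero (A₁ := A₁) hδ hA₂
    set η : ℝ := ε₀ / (2 * (‖A₁‖ + 1)) with hηdef
    have hηpos : 0 < η := by positivity
    have : η ∈ S := by
      refine ⟨hηpos.le, coer_perturb hε₀ hc₀ ?_⟩
      rw [sub_zero, abs_of_pos hηpos]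
    exact lt_of_lt_of_le hηpos (le_csSup hSbdd this)
  have hIco : ∀ ℓ : ℝ, 0 ≤ ℓ → ℓ < lp → coer A₁ A₂ ℓ := by
    intro ℓ h0 hlt
    obtain ⟨m, hm, hmlt⟩ := exists_lt_of_lt_csSup hSne hlt
    exact hcombo0 m hm ℓ h0 hmlt.le
  have hlpnot : ¬ coer A₁ A₂ lp := by
    intro hco
    obtain ⟨ε, hε, hc⟩ := hco
    set η : ℝ := ε / (2 * (‖A₁‖ + 1)) with hηdef
    have hηpos : 0 < η := by positivity
    have hmem : lp + η ∈ S := by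
      refine ⟨by linarith, coer_perturb hε hc ?_⟩
      rw [add_sub_cancel_left, abs_of_pos hηpos]
    have := le_csSup hSbdd hmem
    linarith
  -- A₂ - lp A₁ is positive semidefinite
  have hpsd : ∀ w : H, 0 ≤ ⟪(A₂ - lp • A₁) w, w⟫ := by
    intro w
    rw [B_inner]
    rcases le_or_gt ⟪A₁ w, w⟫ 0 with h | h
    · have h2 := hA₂ w
      nlinarith [sq_nonneg ‖w‖]
    · have hub : ∀ ℓ ∈ S, ℓ ≤ ⟪A₂ w, w⟫ / ⟪A₁ w, w⟫ := by
        intro ℓ hℓ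
        obtain ⟨ε, hε, hc⟩ := hℓ.2
        have := hc w
        rw [B_inner] at this
        rw [le_div_iff₀ h]
        nlinarith [sq_nonneg ‖w‖]
      have := csSup_le hSne hub
      rw [← hlpdef] at this
      rw [le_div_iff₀ h] at this
      linarith
  -- almost-null unit vectors at lp
  have hseq : ∀ n : ℕ, ∃ w : H, ‖w‖ = 1 ∧
      ⟪(A₂ - lp • A₁) w, w⟫ < 1/(n+1 : ℝ) := by
    intro n
    by_contra hcon
    push_neg at hcon
    apply hlpnot
    exact ⟨1/(n+1:ℝ), by positivity, coer_of_unit hcon⟩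
  choose wseq hwseq using hseq
  set U : Ultrafilter ℕ := Ultrafilter.of atTop with hUdef
  have hUle : (U : Filter ℕ) ≤ atTop := Ultrafilter.of_le _
  obtain ⟨k₀, hk₁, hk₂⟩ := weak_limit U wseq
    (C := 1) (Eventually.of_forall fun n => le_of_eq (hwseq n).1) hA₁s hA₁c
  -- positivity of ⟪A₁ k₀, k₀⟫
  have hδlp : δ ≤ lp * ⟪A₁ k₀, k₀⟫ := by
    have hptwise : ∀ n : ℕ, δ - 1/(n+1:ℝ) ≤ lp * ⟪A₁ (wseq n), wseq n⟫ := by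
      intro n
      have h1 := (hwseq n).2
      have h2 := hA₂ (wseq n)
      rw [(hwseq n).1] at h2
      rw [B_inner] at h1
      simp only [one_pow, mul_one] at h2
      linarith
    have ht1 : Tendsto (fun n : ℕ => δ - 1/(n+1:ℝ)) (U : Filter ℕ) (𝓝 δ) := by
      have := tendsto_one_div_add_atTop_nhds_zero_nat (𝕜 := ℝ)
      have h2 := (tendsto_const_nhds (x := δ) (f := atTop)).sub this
      rw [sub_zero] at h2
      exact h2.mono_left hUle
    have ht2 : Tendsto (fun n => lp * ⟪A₁ (wseq n), wseq n⟫) (U : Filter ℕ)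
        (𝓝 (lp * ⟪A₁ k₀, k₀⟫)) := hk₂.const_mul lp
    exact le_of_tendsto_of_tendsto' ht1 ht2 hptwise
  have hA₁k₀ : 0 < ⟪A₁ k₀, k₀⟫ := by
    by_contra hc
    push_neg at hc
    nlinarith
  have hk₀ne : k₀ ≠ 0 := by
    intro hc
    rw [hc] at hA₁k₀
    simp at hA₁k₀
  -- the kernel property ⟪B k₀, k₀⟫ = 0 and B k₀ = 0
  set B : H →L[ℝ] H := A₂ - lp • A₁ with hBdef
  have hBs : IsSelfAdjoint B := selfadj_sub hA₁s hA₂s lp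
  have hψ0 : ⟪B k₀, k₀⟫ = 0 := by
    have hge : 0 ≤ ⟪B k₀, k₀⟫ := hpsd k₀
    have hle : ⟪B k₀, k₀⟫ ≤ 0 := by
      have hptwise : ∀ n : ℕ,
          2 * ⟪A₂ k₀, wseq n⟫ - ⟪A₂ k₀, k₀⟫ - lp * ⟪A₁ (wseq n), wseq n⟫
            ≤ ⟪B (wseq n), wseq n⟫ := by
        intro n
        have hexp : 0 ≤ ⟪A₂ (wseq n - k₀), wseq n - k₀⟫ := by
          have := hA₂ (wseq n - k₀)
          nlinarith [sq_nonneg ‖wseq n - k₀‖]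
        have hsym : ⟪A₂ (wseq n), k₀⟫ = ⟪A₂ k₀, wseq n⟫ := by
          rw [inner_symm hA₂s, real_inner_comm]
        rw [map_sub, inner_sub_left, inner_sub_right, inner_sub_right, hsym] at hexp
        rw [hBdef, B_inner]
        have h9 : ⟪A₂ k₀, wseq n⟫ = ⟪wseq n, A₂ k₀⟫ := real_inner_comm _ _
        linarith [hexp]
      have htL : Tendsto (fun n =>
          2 * ⟪A₂ k₀, wseq n⟫ - ⟪A₂ k₀, k₀⟫ - lp * ⟪A₁ (wseq n), wseq n⟫)
          (U : Filter ℕ) (𝓝 (2 * ⟪A₂ k₀, k₀⟫ - ⟪A₂ k₀, k₀⟫ - lp * ⟪A₁ k₀, k₀⟫)) := by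
        have t1 : Tendsto (fun n => ⟪A₂ k₀, wseq n⟫) (U : Filter ℕ) (𝓝 ⟪A₂ k₀, k₀⟫) := by
          have := hk₁ (A₂ k₀)
          have he : ∀ n, ⟪wseq n, A₂ k₀⟫ = ⟪A₂ k₀, wseq n⟫ := fun n => real_inner_comm _ _
          rw [real_inner_comm (A₂ k₀) k₀] at this
          exact Tendsto.congr he this
        exact ((t1.const_mul 2).sub tendsto_const_nhds).sub (hk₂.const_mul lp)
      have htR : Tendsto (fun n => ⟪B (wseq n), wseq n⟫) (U : Filter ℕ) (𝓝 0) := by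
        have hub : ∀ n : ℕ, ⟪B (wseq n), wseq n⟫ < 1/(n+1:ℝ) := fun n => (hwseq n).2
        have hlb : ∀ n : ℕ, 0 ≤ ⟪B (wseq n), wseq n⟫ := fun n => hpsd (wseq n)
        have h0 : Tendsto (fun n : ℕ => 1/(n+1:ℝ)) (U : Filter ℕ) (𝓝 0) :=
          tendsto_one_div_add_atTop_nhds_zero_nat.mono_left hUle
        apply squeeze_zero hlb (fun n => (hub n).le) h0
      have := le_of_tendsto_of_tendsto' htL htR hptwise
      have heq : 2 * ⟪A₂ k₀, k₀⟫ - ⟪A₂ k₀, k₀⟫ - lp * ⟪A₁ k₀, k₀⟫ = ⟪B k₀, k₀⟫ := by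
        rw [hBdef, B_inner]; ring
      linarith [heq ▸ this]
    linarith
  have hBk₀ : B k₀ = 0 := by
    have hinner : ∀ y : H, ⟪B k₀, y⟫ = 0 := by
      intro y
      by_contra hc
      set c : ℝ := ⟪B k₀, y⟫ with hcdef
      set M : ℝ := ⟪B y, y⟫ with hMdef
      have hM0 : 0 ≤ M := hpsd y
      have hq1 : ∀ t : ℝ, 0 ≤ 2 * t * c + t^2 * M := by
        intro t
        have := hpsd (k₀ + t • y)
        have hQ := Q_line hBs 0 0 k₀ y t
        simp only [Q, inner_zero_right, add_zero] at hQ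
        rw [hQ] at this
        rw [hψ0] at this
        linarith
      have hq2 := hq1 (-c/(M+1))
      have hM1 : 0 < M + 1 := by linarith
      have hval : 2 * (-c/(M+1)) * c + (-c/(M+1))^2 * M
          = (c^2 * (-(M+2)))/(M+1)^2 := by
        field_simp
        ring
      rw [hval, le_div_iff₀ (by positivity : (0:ℝ) < (M+1)^2)] at hq2
      have hcpos : 0 < c^2 := by positivity
      nlinarith [hq2, mul_pos hcpos (by linarith : (0:ℝ) < M + 2)]
    have := hinner (B k₀)
    rwa [inner_self_eq_zero] at this
  -- limit of the minimizers as ℓ → lp from below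
  haveI : NeBot (𝓝[<] lp) := nhdsLT_neBot lp
  set F : Filter ℝ := 𝓝[<] lp with hFdef
  set U' : Ultrafilter ℝ := Ultrafilter.of F with hU'def
  have hU'le : (U' : Filter ℝ) ≤ F := Ultrafilter.of_le _
  have hmemIco : ∀ᶠ ℓ in (U' : Filter ℝ), 0 ≤ ℓ ∧ ℓ < lp := by
    apply hU'le
    have : Set.Ico 0 lp ∈ 𝓝[<] lp := Ico_mem_nhdsLT hlppos
    filter_upwards [this] with ℓ hℓ using ⟨hℓ.1, hℓ.2⟩
  set zm : ℝ → H := zmin A₁ A₂ a₁ a₂ with hzmdef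
  have hsupp : ∀ᶠ ℓ in (U' : Filter ℝ), ∀ w : H,
      Q A₂ a₂ b₂ (zm ℓ) - ℓ * Q A₁ a₁ b₁ (zm ℓ) ≤ Q A₂ a₂ b₂ w - ℓ * Q A₁ a₁ b₁ w := by
    filter_upwards [hmemIco] with ℓ hℓ
    obtain ⟨ε, hε, hc⟩ := hIco ℓ hℓ.1 hℓ.2
    exact zmin_isMin hA₁s hA₂s hε hc
  have hult : ∀ᶠ ℓ in (U' : Filter ℝ), Q A₁ a₁ b₁ (zm ℓ) < ustar := by
    filter_upwards [hmemIco] with ℓ hℓ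
    exact hblock ℓ (hIco ℓ hℓ.1 hℓ.2)
  -- uniform norm bound on the minimizers
  obtain ⟨R, hR⟩ := Q_norm_bound hδ hA₂ a₂ b₂
    (Q A₂ a₂ b₂ q + lp * |Q A₁ a₁ b₁ q| + lp * |ustar|)
  have hbound : ∀ᶠ ℓ in (U' : Filter ℝ), ‖zm ℓ‖ ≤ R := by
    filter_upwards [hmemIco, hsupp, hult] with ℓ hℓ hs hu
    apply hR
    have h1 := hs q
    have habs1 : -(lp * |Q A₁ a₁ b₁ q|) ≤ ℓ * Q A₁ a₁ b₁ q ∧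
        ℓ * Q A₁ a₁ b₁ q ≤ lp * |Q A₁ a₁ b₁ q| := by
      constructor <;>
        nlinarith [le_abs_self (Q A₁ a₁ b₁ q), neg_abs_le (Q A₁ a₁ b₁ q),
          abs_nonneg (Q A₁ a₁ b₁ q), hℓ.1, hℓ.2.le]
    have habs2 : ℓ * Q A₁ a₁ b₁ (zm ℓ) ≤ lp * |ustar| := by
      nlinarith [le_abs_self ustar, neg_abs_le ustar, abs_nonneg ustar, hℓ.1, hℓ.2.le]
    linarith
  obtain ⟨zb, hzb₁, hzb₂⟩ := weak_limit U' zm hbound hA₁s hA₁c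
  have hQ1lim : Tendsto (fun ℓ => Q A₁ a₁ b₁ (zm ℓ)) (U' : Filter ℝ) (𝓝 (Q A₁ a₁ b₁ zb)) := by
    simp only [Q]
    exact (hzb₂.add (hzb₁ a₁)).add tendsto_const_nhds
  have hzble : Q A₁ a₁ b₁ zb ≤ ustar := le_of_tendsto hQ1lim (hult.mono fun ℓ h => h.le)
  have hidtend : Tendsto (fun ℓ : ℝ => ℓ) (U' : Filter ℝ) (𝓝 lp) :=
    (tendsto_id.mono_left (le_trans hU'le nhdsWithin_le_nhds))
  -- support inequality in the limit
  have hsupp_lim : ∀ w : H,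
      Q A₂ a₂ b₂ zb - lp * Q A₁ a₁ b₁ zb ≤ Q A₂ a₂ b₂ w - lp * Q A₁ a₁ b₁ w := by
    intro w
    have hptwise : ∀ᶠ ℓ in (U' : Filter ℝ),
        Q A₂ a₂ b₂ zb + 2 * (⟪A₂ zb, zm ℓ⟫ - ⟪A₂ zb, zb⟫) + (⟪zm ℓ, a₂⟫ - ⟪zb, a₂⟫)
          - ℓ * Q A₁ a₁ b₁ (zm ℓ) ≤ Q A₂ a₂ b₂ w - ℓ * Q A₁ a₁ b₁ w := by
      filter_upwards [hsupp] with ℓ hs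
      have h1 := hs w
      have hexp : Q A₂ a₂ b₂ (zm ℓ) = Q A₂ a₂ b₂ zb
          + (2 * ⟪A₂ zb, zm ℓ - zb⟫ + ⟪zm ℓ - zb, a₂⟫) + ⟪A₂ (zm ℓ - zb), zm ℓ - zb⟫ := by
        have := Q_expand hA₂s a₂ b₂ zb (zm ℓ - zb)
        rw [add_sub_cancel] at this
        exact this
      have hge : 0 ≤ ⟪A₂ (zm ℓ - zb), zm ℓ - zb⟫ := by
        have := hA₂ (zm ℓ - zb)
        nlinarith [sq_nonneg ‖zm ℓ - zb‖]
      rw [inner_sub_right, inner_sub_left] at hexp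
      linarith
    have htL : Tendsto (fun ℓ =>
        Q A₂ a₂ b₂ zb + 2 * (⟪A₂ zb, zm ℓ⟫ - ⟪A₂ zb, zb⟫) + (⟪zm ℓ, a₂⟫ - ⟪zb, a₂⟫)
          - ℓ * Q A₁ a₁ b₁ (zm ℓ)) (U' : Filter ℝ)
        (𝓝 (Q A₂ a₂ b₂ zb + 2 * (⟪A₂ zb, zb⟫ - ⟪A₂ zb, zb⟫) + (⟪zb, a₂⟫ - ⟪zb, a₂⟫)
          - lp * Q A₁ a₁ b₁ zb)) := by
      have t1 : Tendsto (fun ℓ => ⟪A₂ zb, zm ℓ⟫) (U' : Filter ℝ) (𝓝 ⟪A₂ zb, zb⟫) := by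
        have := hzb₁ (A₂ zb)
        have he : ∀ ℓ, ⟪zm ℓ, A₂ zb⟫ = ⟪A₂ zb, zm ℓ⟫ := fun ℓ => real_inner_comm _ _
        rw [real_inner_comm (A₂ zb) zb] at this
        exact Tendsto.congr he this
      have t2 : Tendsto (fun ℓ => ⟪zm ℓ, a₂⟫) (U' : Filter ℝ) (𝓝 ⟪zb, a₂⟫) := hzb₁ a₂
      exact ((tendsto_const_nhds.add (((t1.sub tendsto_const_nhds)).const_mul 2)).add
        (t2.sub tendsto_const_nhds)).sub (hidtend.mul hQ1lim)
    have htR : Tendsto (fun ℓ => Q A₂ a₂ b₂ w - ℓ * Q A₁ a₁ b₁ w) (U' : Filter ℝ)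
        (𝓝 (Q A₂ a₂ b₂ w - lp * Q A₁ a₁ b₁ w)) :=
      tendsto_const_nhds.sub (hidtend.mul tendsto_const_nhds)
    have := le_of_tendsto_of_tendsto htL htR hptwise
    simpa using this
  -- moving along the kernel line keeps the support property
  have hsigma : (2 * ⟪B zb, k₀⟫ + ⟪k₀, a₂ - lp • a₁⟫) = 0 := by
    have hz : ⟪B zb, k₀⟫ = 0 := by
      rw [inner_symm hBs, hBk₀, inner_zero_right]
    have hsub : ∀ t : ℝ, Q (A₂ - lp • A₁) (a₂ - lp • a₁) (b₂ - lp * b₁) zb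
        ≤ Q (A₂ - lp • A₁) (a₂ - lp • a₁) (b₂ - lp * b₁) (zb + t • k₀) := by
      intro t
      have := hsupp_lim (zb + t • k₀)
      rw [Q_sub_eq, Q_sub_eq] at this
      exact this
    have hline : ∀ t : ℝ, Q (A₂ - lp • A₁) (a₂ - lp • a₁) (b₂ - lp * b₁) (zb + t • k₀)
        = Q (A₂ - lp • A₁) (a₂ - lp • a₁) (b₂ - lp * b₁) zb
          + t * (2 * ⟪B zb, k₀⟫ + ⟪k₀, a₂ - lp • a₁⟫) := by
      intro t
      rw [Q_line hBs]
      have hBk : ⟪(A₂ - lp • A₁) k₀, k₀⟫ = 0 := hψ0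
      rw [hBk]
      rw [hBdef]
      ring
    have h1 := hsub 1
    have h2 := hsub (-1)
    rw [hline 1] at h1
    rw [hline (-1)] at h2
    linarith
  have hlineQ1 : ∀ t : ℝ, Q A₁ a₁ b₁ (zb + t • k₀)
      = Q A₁ a₁ b₁ zb + t * (2 * ⟪A₁ zb, k₀⟫ + ⟪k₀, a₁⟫) + t^2 * ⟪A₁ k₀, k₀⟫ :=
    fun t => Q_line hA₁s a₁ b₁ zb k₀ t
  -- find t with Q₁(zb + t k₀) = ustar
  set τ : ℝ := 2 * ⟪A₁ zb, k₀⟫ + ⟪k₀, a₁⟫ with hτdef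
  set c1 : ℝ := ⟪A₁ k₀, k₀⟫ with hc1def
  set Δ : ℝ := |ustar - Q A₁ a₁ b₁ zb| with hΔdef
  set T : ℝ := max 1 ((|τ| + Δ + 1)/c1) with hTdef
  have hT1 : (1:ℝ) ≤ T := le_max_left _ _
  have hT0 : (0:ℝ) ≤ T := by linarith
  have hTc : |τ| + Δ + 1 ≤ c1 * T := by
    have h := le_max_right 1 ((|τ| + Δ + 1)/c1)
    rw [← hTdef] at h
    rw [div_le_iff₀ hA₁k₀] at h
    linarith [mul_comm c1 T]
  have hFT : ustar ≤ Q A₁ a₁ b₁ (zb + T • k₀) := by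
    rw [hlineQ1 T]
    have h1 : -|τ| ≤ τ := neg_abs_le τ
    have h2 : ustar - Q A₁ a₁ b₁ zb ≤ Δ := le_abs_self _
    have h3 : T * (|τ| + Δ + 1) ≤ T * (c1 * T) := mul_le_mul_of_nonneg_left hTc hT0
    nlinarith
  have hcontline : ContinuousOn (fun t : ℝ => Q A₁ a₁ b₁ (zb + t • k₀)) (Set.Icc 0 T) := by
    apply Continuous.continuousOn
    exact (Q_cont A₁ a₁ b₁).comp (continuous_const.add (continuous_id.smul continuous_const))
  have hmem : ustar ∈ Set.Icc (Q A₁ a₁ b₁ (zb + (0:ℝ) • k₀)) (Q A₁ a₁ b₁ (zb + T • k₀)) := by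
    constructor
    · simpa using hzble
    · exact hFT
  obtain ⟨t₀, ht₀, ht₀eq⟩ := intermediate_value_Icc hT0 hcontline hmem
  refine ⟨zb + t₀ • k₀, lp, ht₀eq, ?_⟩
  intro w
  rw [Q_sub_eq, Q_sub_eq]
  have hline : Q (A₂ - lp • A₁) (a₂ - lp • a₁) (b₂ - lp * b₁) (zb + t₀ • k₀)
      = Q (A₂ - lp • A₁) (a₂ - lp • a₁) (b₂ - lp * b₁) zb := by
    rw [Q_line (selfadj_sub hA₁s hA₂s lp)]
    have hBk : ⟪(A₂ - lp • A₁) k₀, k₀⟫ = 0 := hψ0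
    rw [hBk]
    have : (2 * ⟪(A₂ - lp • A₁) zb, k₀⟫ + ⟪k₀, a₂ - lp • a₁⟫) = 0 := by
      rw [← hBdef]
      exact hsigma
    rw [this]
    ring
  rw [hline]
  have := hsupp_lim w
  rw [Q_sub_eq, Q_sub_eq] at this
  exact this


lemma oper_neg (A₁ A₂ : H →L[ℝ] H) (ℓ : ℝ) :
    A₂ - ℓ • (-A₁) = A₂ - (-ℓ) • A₁ := by
  rw [smul_neg, neg_smul]

lemma vec_neg (a₁ a₂ : H) (ℓ : ℝ) :
    a₂ - ℓ • (-a₁) = a₂ - (-ℓ) • a₁ := by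
  rw [smul_neg, neg_smul]

lemma zmin_neg (A₁ A₂ : H →L[ℝ] H) (a₁ a₂ : H) (ℓ : ℝ) :
    zmin (-A₁) A₂ (-a₁) a₂ ℓ = zmin A₁ A₂ a₁ a₂ (-ℓ) := by
  unfold zmin
  rw [oper_neg, vec_neg]

lemma Q_neg (A₁ : H →L[ℝ] H) (a₁ : H) (b₁ : ℝ) (x : H) :
    Q (-A₁) (-a₁) (-b₁) x = -(Q A₁ a₁ b₁ x) := by
  simp only [Q, ContinuousLinearMap.neg_apply, inner_neg_left, inner_neg_right]
  ring

lemma coer_neg {A₁ A₂ : H →L[ℝ] H} {ℓ : ℝ} :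
    coer (-A₁) A₂ ℓ ↔ coer A₁ A₂ (-ℓ) := by
  unfold coer
  rw [oper_neg]

lemma coer_between {A₁ A₂ : H →L[ℝ] H} {ℓa ℓb ℓ : ℝ} (h₁ : coer A₁ A₂ ℓa)
    (h₂ : coer A₁ A₂ ℓb) (h : ℓ ∈ Set.uIcc ℓa ℓb) : coer A₁ A₂ ℓ := by
  have hseg : ℓ ∈ segment ℝ ℓa ℓb := by rw [segment_eq_uIcc]; exact h
  obtain ⟨s, t, hs, ht, hst, heq⟩ := hseg
  simp only [smul_eq_mul] at heq
  rw [← heq]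
  exact coer_combo h₁ h₂ hs ht hst

theorem step1 {A₁ A₂ : H →L[ℝ] H} (hA₁s : IsSelfAdjoint A₁)
    (hA₂s : IsSelfAdjoint A₂) (hA₁c : IsCompactOperator (A₁ : H → H))
    {δ : ℝ} (hδ : 0 < δ) (hA₂ : ∀ x : H, δ * ‖x‖ ^ 2 ≤ ⟪A₂ x, x⟫)
    (a₁ a₂ : H) (b₁ b₂ : ℝ) (ustar : ℝ) (p q : H)
    (hp : Q A₁ a₁ b₁ p < ustar) (hq : ustar < Q A₁ a₁ b₁ q) :
    ∃ (z : H) (ℓ : ℝ), Q A₁ a₁ b₁ z = ustar ∧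
      ∀ w : H, Q A₂ a₂ b₂ z - ℓ * Q A₁ a₁ b₁ z ≤ Q A₂ a₂ b₂ w - ℓ * Q A₁ a₁ b₁ w := by
  by_cases hex : ∃ ℓ : ℝ, coer A₁ A₂ ℓ ∧ ustar ≤ Q A₁ a₁ b₁ (zmin A₁ A₂ a₁ a₂ ℓ)
  · by_cases hex2 : ∃ ℓ : ℝ, coer A₁ A₂ ℓ ∧ Q A₁ a₁ b₁ (zmin A₁ A₂ a₁ a₂ ℓ) ≤ ustar
    · obtain ⟨ℓ₁, hco₁, h₁⟩ := hex
      obtain ⟨ℓ₂, hco₂, h₂⟩ := hex2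
      have hIcc : ∀ ℓ ∈ Set.uIcc ℓ₂ ℓ₁, coer A₁ A₂ ℓ :=
        fun ℓ hℓ => coer_between hco₂ hco₁ hℓ
      have hsub : Set.uIcc ℓ₂ ℓ₁ ⊆ {ℓ : ℝ | IsUnit (A₂ - ℓ • A₁)} := by
        intro ℓ hℓ
        obtain ⟨ε, hε, hc⟩ := hIcc ℓ hℓ
        exact isUnit_of_coercive (selfadj_sub hA₁s hA₂s ℓ) hε hc
      have hcont : ContinuousOn (fun ℓ => Q A₁ a₁ b₁ (zmin A₁ A₂ a₁ a₂ ℓ))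
          (Set.uIcc ℓ₂ ℓ₁) :=
        (Q_cont A₁ a₁ b₁).comp_continuousOn ((zmin_contOn A₁ A₂ a₁ a₂).mono hsub)
      have hmem : ustar ∈ Set.uIcc (Q A₁ a₁ b₁ (zmin A₁ A₂ a₁ a₂ ℓ₂))
          (Q A₁ a₁ b₁ (zmin A₁ A₂ a₁ a₂ ℓ₁)) := by
        rw [Set.mem_uIcc]
        exact Or.inl ⟨h₂, h₁⟩
      obtain ⟨ℓs, hℓsmem, hℓseq⟩ := intermediate_value_uIcc hcont hmem
      obtain ⟨ε, hε, hc⟩ := hIcc ℓs hℓsmem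
      exact ⟨zmin A₁ A₂ a₁ a₂ ℓs, ℓs, hℓseq, zmin_isMin hA₁s hA₂s hε hc⟩
    · -- all interior minimizers have value > ustar : mirrored blocked case
      push_neg at hex2
      have hq' : -ustar < Q (-A₁) (-a₁) (-b₁) p := by
        rw [Q_neg]
        linarith
      have hblock' : ∀ ℓ : ℝ, coer (-A₁) A₂ ℓ →
          Q (-A₁) (-a₁) (-b₁) (zmin (-A₁) A₂ (-a₁) a₂ ℓ) < -ustar := by
        intro ℓ hco
        rw [zmin_neg, Q_neg]
        have := hex2 (-ℓ) (coer_neg.mp hco)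
        linarith
      obtain ⟨z, ℓ, hz, hsup⟩ := step1_blocked hA₁s.neg hA₂s
        (by simpa using hA₁c.neg) hδ hA₂ (-a₁) a₂ (-b₁) b₂ (-ustar) p hq' hblock'
      rw [Q_neg] at hz
      refine ⟨z, -ℓ, by linarith, fun w => ?_⟩
      have := hsup w
      rw [Q_neg, Q_neg] at this
      have hzu : Q A₁ a₁ b₁ z = ustar := by linarith
      nlinarith [this]
  · push_neg at hex
    exact step1_blocked hA₁s hA₂s hA₁c hδ hA₂ a₁ a₂ b₁ b₂ ustar q hq hex


lemma exists_perp {e : H} (hdim : 3 ≤ Module.rank ℝ H) (he : ‖e‖ = 1) :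
    ∃ u : H, u ≠ 0 ∧ ⟪e, u⟫ = 0 := by
  by_contra hcon
  push_neg at hcon
  have hbot : (ℝ ∙ e)ᗮ = ⊥ := by
    rw [Submodule.eq_bot_iff]
    intro u hu
    rw [Submodule.mem_orthogonal] at hu
    by_contra hne
    exact hcon u hne (hu e (Submodule.mem_span_singleton_self e))
  have htop : (ℝ ∙ e) = ⊤ := Submodule.orthogonal_eq_bot_iff.mp hbot
  have h1 : Module.rank ℝ H = Module.rank ℝ (ℝ ∙ e : Submodule ℝ H) := by
    rw [htop]
    exact (rank_top ℝ H).symm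
  have h2 : Module.rank ℝ (ℝ ∙ e : Submodule ℝ H) ≤ 1 := by
    have := rank_span_le (R := ℝ) ({e} : Set H)
    simpa using this
  rw [h1] at hdim
  have : (3 : Cardinal) ≤ 1 := le_trans hdim h2
  norm_num at this

theorem main {A₁ A₂ : H →L[ℝ] H} (hdim : 3 ≤ Module.rank ℝ H)
    (hA₁s : IsSelfAdjoint A₁) (hA₂s : IsSelfAdjoint A₂)
    (hA₁c : IsCompactOperator (A₁ : H → H))
    {e : H} (he : ‖e‖ = 1) (he0 : ⟪A₁ e, e⟫ = 0)
    {δ : ℝ} (hδ : 0 < δ) (hA₂ : ∀ x : H, δ * ‖x‖ ^ 2 ≤ ⟪A₂ x, x⟫)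
    (a₁ a₂ : H) (b₁ b₂ : ℝ) :
    Convex ℝ {p : ℝ × ℝ | ∃ x : H, p = (Q A₁ a₁ b₁ x, Q A₂ a₂ b₂ x)} ∧
    IsClosed {p : ℝ × ℝ | ∃ x : H, p = (Q A₁ a₁ b₁ x, Q A₂ a₂ b₂ x)} := by
  have hv2 := exists_perp hdim he
  set S : Set (ℝ × ℝ) := {p : ℝ × ℝ | ∃ x : H, p = (Q A₁ a₁ b₁ x, Q A₂ a₂ b₂ x)}
    with hSdef
  constructor
  · -- convexity
    intro p₁ hp₁ p₂ hp₂ a b ha hb hab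
    obtain ⟨x, hx⟩ := hp₁
    obtain ⟨y, hy⟩ := hp₂
    rcases eq_or_lt_of_le ha with rfl | ha'
    · have hb1 : b = 1 := by linarith
      have : (0:ℝ) • p₁ + b • p₂ = p₂ := by rw [hb1]; simp
      rw [this]
      exact ⟨y, hy⟩
    rcases eq_or_lt_of_le hb with rfl | hb'
    · have ha1 : a = 1 := by linarith
      have : a • p₁ + (0:ℝ) • p₂ = p₁ := by rw [ha1]; simp
      rw [this]
      exact ⟨x, hx⟩
    set ustar : ℝ := a * Q A₁ a₁ b₁ x + b * Q A₁ a₁ b₁ y with hustar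
    set vstar : ℝ := a * Q A₂ a₂ b₂ x + b * Q A₂ a₂ b₂ y with hvstar
    have hgoal : a • p₁ + b • p₂ = (ustar, vstar) := by
      rw [hx, hy]
      simp [Prod.smul_mk, hustar, hvstar]
    rw [hgoal]
    have hfinish : ∀ z' : H, Q A₁ a₁ b₁ z' = ustar → Q A₂ a₂ b₂ z' = vstar →
        (ustar, vstar) ∈ S := by
      intro z' h1 h2
      exact ⟨z', by rw [h1, h2]⟩
    by_cases hfeq : Q A₁ a₁ b₁ x = Q A₁ a₁ b₁ y
    · have hueq : ustar = Q A₁ a₁ b₁ x := by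
        rw [hustar, hfeq]
        linear_combination (Q A₁ a₁ b₁ y) * hab
      rcases le_total (Q A₂ a₂ b₂ x) (Q A₂ a₂ b₂ y) with hle | hle
      · have hbb := mul_le_mul_of_nonneg_left hle hb
        have hsum : a * Q A₂ a₂ b₂ x + b * Q A₂ a₂ b₂ x = Q A₂ a₂ b₂ x := by
          linear_combination (Q A₂ a₂ b₂ x) * hab
        have hvge : Q A₂ a₂ b₂ x ≤ vstar := by rw [hvstar]; linarith
        obtain ⟨z', h1, h2⟩ := ray hA₁s hδ hA₂ he he0 hv2 a₁ a₂ b₁ b₂ x hvge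
        exact hfinish z' (by rw [h1, hueq]) h2
      · have hbb := mul_le_mul_of_nonneg_left hle ha
        have hsum : a * Q A₂ a₂ b₂ y + b * Q A₂ a₂ b₂ y = Q A₂ a₂ b₂ y := by
          linear_combination (Q A₂ a₂ b₂ y) * hab
        have hvge : Q A₂ a₂ b₂ y ≤ vstar := by rw [hvstar]; linarith
        obtain ⟨z', h1, h2⟩ := ray hA₁s hδ hA₂ he he0 hv2 a₁ a₂ b₁ b₂ y hvge
        exact hfinish z' (by rw [h1, hueq, hfeq]) h2
    · have hstep : ∃ (z : H) (ℓ : ℝ), Q A₁ a₁ b₁ z = ustar ∧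
          ∀ w : H, Q A₂ a₂ b₂ z - ℓ * Q A₁ a₁ b₁ z
            ≤ Q A₂ a₂ b₂ w - ℓ * Q A₁ a₁ b₁ w := by
        rcases lt_or_gt_of_ne hfeq with hlt | hlt
        · have hkey : ustar - Q A₁ a₁ b₁ x = b * (Q A₁ a₁ b₁ y - Q A₁ a₁ b₁ x) := by
            rw [hustar]; linear_combination (Q A₁ a₁ b₁ x) * hab
          have hkey2 : Q A₁ a₁ b₁ y - ustar = a * (Q A₁ a₁ b₁ y - Q A₁ a₁ b₁ x) := by
            rw [hustar]; linear_combination (-(Q A₁ a₁ b₁ y)) * hab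
          have h1 := mul_pos hb' (sub_pos.mpr hlt)
          have h2 := mul_pos ha' (sub_pos.mpr hlt)
          have hp' : Q A₁ a₁ b₁ x < ustar := by linarith
          have hq' : ustar < Q A₁ a₁ b₁ y := by linarith
          exact step1 hA₁s hA₂s hA₁c hδ hA₂ a₁ a₂ b₁ b₂ ustar x y hp' hq'
        · have hkey : ustar - Q A₁ a₁ b₁ y = a * (Q A₁ a₁ b₁ x - Q A₁ a₁ b₁ y) := by
            rw [hustar]; linear_combination (Q A₁ a₁ b₁ y) * hab
          have hkey2 : Q A₁ a₁ b₁ x - ustar = b * (Q A₁ a₁ b₁ x - Q A₁ a₁ b₁ y) := by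
            rw [hustar]; linear_combination (-(Q A₁ a₁ b₁ x)) * hab
          have h1 := mul_pos ha' (sub_pos.mpr hlt)
          have h2 := mul_pos hb' (sub_pos.mpr hlt)
          have hp' : Q A₁ a₁ b₁ y < ustar := by linarith
          have hq' : ustar < Q A₁ a₁ b₁ x := by linarith
          exact step1 hA₁s hA₂s hA₁c hδ hA₂ a₁ a₂ b₁ b₂ ustar y x hp' hq'
      obtain ⟨z, ℓ, hz, hsup⟩ := hstep
      have hzv : Q A₂ a₂ b₂ z ≤ vstar := by
        have h1 := hsup x
        have h2 := hsup y
        rw [hz] at h1 h2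
        have m1 := mul_le_mul_of_nonneg_left h1 ha
        have m2 := mul_le_mul_of_nonneg_left h2 hb
        have e1 : a * Q A₂ a₂ b₂ z + b * Q A₂ a₂ b₂ z = Q A₂ a₂ b₂ z := by
          linear_combination (Q A₂ a₂ b₂ z) * hab
        have e2 : a * (ℓ * ustar) + b * (ℓ * ustar) = ℓ * ustar := by
          linear_combination (ℓ * ustar) * hab
        have e3 : a * (ℓ * Q A₁ a₁ b₁ x) + b * (ℓ * Q A₁ a₁ b₁ y) = ℓ * ustar := by
          rw [hustar]; ring
        rw [hvstar]
        nlinarith [m1, m2, e1, e2, e3]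
      obtain ⟨z', h1, h2⟩ := ray hA₁s hδ hA₂ he he0 hv2 a₁ a₂ b₁ b₂ z hzv
      exact hfinish z' (by rw [h1, hz]) h2
  · -- closedness
    apply IsSeqClosed.isClosed
    intro pn p hpn hlim
    choose xs hxs using hpn
    have hfst : Tendsto (fun n => (pn n).1) atTop (𝓝 p.1) :=
      (continuous_fst.tendsto p).comp hlim
    have hsnd : Tendsto (fun n => (pn n).2) atTop (𝓝 p.2) :=
      (continuous_snd.tendsto p).comp hlim
    have hqv : ∀ n, Q A₂ a₂ b₂ (xs n) = (pn n).2 := fun n =>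
      (congrArg Prod.snd (hxs n)).symm
    have hqu : ∀ n, Q A₁ a₁ b₁ (xs n) = (pn n).1 := fun n =>
      (congrArg Prod.fst (hxs n)).symm
    obtain ⟨R, hR⟩ := Q_norm_bound hδ hA₂ a₂ b₂ (p.2 + 1)
    have hbnd : ∀ᶠ n in atTop, ‖xs n‖ ≤ R := by
      have hev : ∀ᶠ n in atTop, (pn n).2 ≤ p.2 + 1 :=
        hsnd.eventually (eventually_le_nhds (lt_add_one p.2))
      filter_upwards [hev] with n hn
      exact hR _ (by rw [hqv n]; exact hn)
    set U : Ultrafilter ℕ := Ultrafilter.of atTop with hUdef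
    have hUle : (U : Filter ℕ) ≤ atTop := Ultrafilter.of_le _
    obtain ⟨xb, hxb₁, hxb₂⟩ := weak_limit U xs (hUle hbnd) hA₁s hA₁c
    have hQ1lim : Tendsto (fun n => Q A₁ a₁ b₁ (xs n)) (U : Filter ℕ)
        (𝓝 (Q A₁ a₁ b₁ xb)) := by
      simp only [Q]
      exact (hxb₂.add (hxb₁ a₁)).add tendsto_const_nhds
    have hQ1eq : Q A₁ a₁ b₁ xb = p.1 := by
      have h2 : Tendsto (fun n => Q A₁ a₁ b₁ (xs n)) (U : Filter ℕ) (𝓝 p.1) := by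
        have := hfst.mono_left hUle
        exact Tendsto.congr (fun n => (hqu n).symm) this
      exact tendsto_nhds_unique hQ1lim h2
    have hQ2le : Q A₂ a₂ b₂ xb ≤ p.2 := by
      have hptwise : ∀ n : ℕ, Q A₂ a₂ b₂ xb
          + 2 * (⟪A₂ xb, xs n⟫ - ⟪A₂ xb, xb⟫) + (⟪xs n, a₂⟫ - ⟪xb, a₂⟫)
            ≤ (pn n).2 := by
        intro n
        rw [← hqv n]
        have hexp : Q A₂ a₂ b₂ (xs n) = Q A₂ a₂ b₂ xb
            + (2 * ⟪A₂ xb, xs n - xb⟫ + ⟪xs n - xb, a₂⟫)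
            + ⟪A₂ (xs n - xb), xs n - xb⟫ := by
          have := Q_expand hA₂s a₂ b₂ xb (xs n - xb)
          rw [add_sub_cancel] at this
          exact this
        have hge : 0 ≤ ⟪A₂ (xs n - xb), xs n - xb⟫ := by
          have := hA₂ (xs n - xb)
          nlinarith [sq_nonneg ‖xs n - xb‖]
        rw [inner_sub_right, inner_sub_left] at hexp
        linarith
      have htL : Tendsto (fun n => Q A₂ a₂ b₂ xb
          + 2 * (⟪A₂ xb, xs n⟫ - ⟪A₂ xb, xb⟫) + (⟪xs n, a₂⟫ - ⟪xb, a₂⟫))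
          (U : Filter ℕ)
          (𝓝 (Q A₂ a₂ b₂ xb + 2 * (⟪A₂ xb, xb⟫ - ⟪A₂ xb, xb⟫)
            + (⟪xb, a₂⟫ - ⟪xb, a₂⟫))) := by
        have t1 : Tendsto (fun n => ⟪A₂ xb, xs n⟫) (U : Filter ℕ) (𝓝 ⟪A₂ xb, xb⟫) := by
          have := hxb₁ (A₂ xb)
          rw [real_inner_comm (A₂ xb) xb] at this
          exact Tendsto.congr (fun n => real_inner_comm _ _) this
        exact (tendsto_const_nhds.add (((t1.sub tendsto_const_nhds)).const_mul 2)).add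
          ((hxb₁ a₂).sub tendsto_const_nhds)
      have htR : Tendsto (fun n => (pn n).2) (U : Filter ℕ) (𝓝 p.2) :=
        hsnd.mono_left hUle
      have := le_of_tendsto_of_tendsto' htL htR hptwise
      simpa using this
    obtain ⟨z', h1, h2⟩ := ray hA₁s hδ hA₂ he he0 hv2 a₁ a₂ b₁ b₂ xb hQ2le
    refine ⟨z', ?_⟩
    rw [h1, hQ1eq, h2]


end NICS

theorem nonhomogeneous_image_convex_closed_special
    {H : Type*} [NormedAddCommGroup H] [InnerProductSpace ℝ H] [CompleteSpace H]
    (hdim : 3 ≤ Module.rank ℝ H)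
    (A₁ A₂ : H →L[ℝ] H) (hA₁s : IsSelfAdjoint A₁) (hA₂s : IsSelfAdjoint A₂)
    (hA₁c : IsCompactOperator A₁)
    (hzero : ∃ x : H, ‖x‖ = 1 ∧ ⟪A₁ x, x⟫ = 0)
    (hpos : ∃ δ : ℝ, 0 < δ ∧ ∀ x : H, δ * ‖x‖ ^ 2 ≤ ⟪A₂ x, x⟫)
    (a₁ a₂ : H) (b₁ b₂ : ℝ) :
    Convex ℝ {p : ℝ × ℝ | ∃ x : H,
      p = (⟪A₁ x, x⟫ + ⟪x, a₁⟫ + b₁, ⟪A₂ x, x⟫ + ⟪x, a₂⟫ + b₂)} ∧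
    IsClosed {p : ℝ × ℝ | ∃ x : H,
      p = (⟪A₁ x, x⟫ + ⟪x, a₁⟫ + b₁, ⟪A₂ x, x⟫ + ⟪x, a₂⟫ + b₂)} := by
  obtain ⟨e, he, he0⟩ := hzero
  obtain ⟨δ, hδ, hA₂c⟩ := hpos
  exact NICS.main hdim hA₁s hA₂s hA₁c he he0 hδ hA₂c a₁ a₂ b₁ b₂
end

section
/- S-procedure: Let H be a real Hilbert space with 3 ≤ dim(H) ≤ ∞, fᵢ(x) = ⟨Aᵢx,x⟩ for i = 0,1,2 with Aᵢ ∈ L(H), and α₀, α₁, α₂ ∈ ℝ. Suppose there exist μ₁, μ₂ ∈ ℝ with μ₁A₁ + μ₂A₂ > 0 and a point x⁰ ∈ H with f₁(x⁰) < α₁ and f₂(x⁰) < α₂. Then [f₀(x) ≤ α₀ for every x with f₁(x) ≤ α₁ and f₂(x) ≤ α₂] holds if and only if there exist τ₁ ≥ 0, τ₂ ≥ 0 such that A₀ ≤ τ₁A₁ + τ₂A₂ (as quadratic forms, i.e., ⟨A₀x,x⟩ ≤ τ₁⟨A₁x,x⟩ + τ₂⟨A₂x,x⟩ for all x) and α₀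 ≥ τ₁α₁ + τ₂α₂. -/
open scoped RealInnerProductSpace

namespace SProcAux

variable {H : Type*} [NormedAddCommGroup H] [InnerProductSpace ℝ H]

noncomputable def Q (A : H →L[ℝ] H) (x : H) : ℝ := ⟪A x, x⟫

noncomputable def Bl (A : H →L[ℝ] H) (x y : H) : ℝ := (⟪A x, y⟫ + ⟪A y, x⟫) / 2

lemma Bl_comm (A : H →L[ℝ] H) (x y : H) : Bl A x y = Bl A y x := by
  unfold Bl; ring

lemma Bl_self (A : H →L[ℝ] H) (x : H) : Bl A x x = Q A x := by
  unfold Bl Q; ring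

lemma Bl_add_right (A : H →L[ℝ] H) (x u v : H) :
    Bl A x (u + v) = Bl A x u + Bl A x v := by
  unfold Bl
  simp [map_add, inner_add_left, inner_add_right]
  ring

lemma Bl_smul_right (A : H →L[ℝ] H) (x u : H) (t : ℝ) :
    Bl A x (t • u) = t * Bl A x u := by
  unfold Bl
  simp [map_smul, real_inner_smul_left, real_inner_smul_right]
  ring

lemma Bl_sub_right (A : H →L[ℝ] H) (x u v : H) :
    Bl A x (u - v) = Bl A x u - Bl A x v := by
  unfold Bl
  simp [map_sub, inner_sub_left, inner_sub_right]
  ring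

lemma Q_smul (A : H →L[ℝ] H) (t : ℝ) (x : H) : Q A (t • x) = t ^ 2 * Q A x := by
  unfold Q
  simp [map_smul, real_inner_smul_left, real_inner_smul_right]
  ring

lemma Q_zero (A : H →L[ℝ] H) : Q A (0 : H) = 0 := by
  unfold Q; simp

lemma Q_neg (A : H →L[ℝ] H) (x : H) : Q A (-x) = Q A x := by
  have := Q_smul A (-1) x
  simpa using this

lemma Q_expand2 (A : H →L[ℝ] H) (a b : ℝ) (x y : H) :
    Q A (a • x + b • y) =
      a ^ 2 * Q A x + b ^ 2 * Q A y + 2 * a * b * Bl A x y := by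
  unfold Q Bl
  simp only [map_add, map_smul, inner_add_left, inner_add_right,
    real_inner_smul_left, real_inner_smul_right]
  ring

lemma Q_expand3 (A : H →L[ℝ] H) (a b c : ℝ) (x y w : H) :
    Q A (a • x + b • y + c • w) =
      a ^ 2 * Q A x + b ^ 2 * Q A y + c ^ 2 * Q A w +
        2 * a * b * Bl A x y + 2 * a * c * Bl A x w + 2 * b * c * Bl A y w := by
  unfold Q Bl
  simp only [map_add, map_smul, inner_add_left, inner_add_right,
    real_inner_smul_left, real_inner_smul_right]
  ring

lemma Q_continuous (A : H →L[ℝ] H) : Continuous (Q A) :=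
  (A.continuous).inner continuous_id

lemma Q_add_op (A B : H →L[ℝ] H) (x : H) : Q (A + B) x = Q A x + Q B x := by
  unfold Q
  simp [ContinuousLinearMap.add_apply, inner_add_left]

lemma Q_sub_op (A B : H →L[ℝ] H) (x : H) : Q (A - B) x = Q A x - Q B x := by
  unfold Q
  simp [ContinuousLinearMap.sub_apply, inner_sub_left]

lemma Q_smul_op (r : ℝ) (A : H →L[ℝ] H) (x : H) : Q (r • A) x = r * Q A x := by
  unfold Q
  simp [ContinuousLinearMap.smul_apply, real_inner_smul_left]


open Cardinal

variable {H : Type*} [NormedAddCommGroup H] [InnerProductSpace ℝ H]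

-- IVT helper
lemma ivt_zero (C₀ C₁ : H →L[ℝ] H) (z : ℝ → H) (hzc : Continuous z)
    (h0 : ∀ t ∈ Set.Icc (0:ℝ) 1, Q C₀ (z t) = 0)
    (hne : ∀ t ∈ Set.Icc (0:ℝ) 1, z t ≠ 0)
    (ha : 0 < Q C₁ (z 0)) (hb : Q C₁ (z 1) < 0) :
    ∃ w : H, w ≠ 0 ∧ Q C₀ w = 0 ∧ Q C₁ w = 0 := by
  have hcont : ContinuousOn (fun t => Q C₁ (z t)) (Set.Icc 0 1) :=
    ((Q_continuous C₁).comp hzc).continuousOn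
  have hmem : (0:ℝ) ∈ Set.Icc (Q C₁ (z 1)) (Q C₁ (z 0)) := ⟨hb.le, ha.le⟩
  obtain ⟨t, ht, hft⟩ := intermediate_value_Icc' zero_le_one hcont hmem
  exact ⟨z t, hne t ht, h0 t ht, hft⟩

-- existence of a vector outside the span of two vectors
lemma exists_not_mem_span (hdim : 3 ≤ Module.rank ℝ H) (x y : H) :
    ∃ v₀ : H, v₀ ∉ Submodule.span ℝ ({x, y} : Set H) := by
  by_contra hcon
  push_neg at hcon
  have htop : Submodule.span ℝ ({x, y} : Set H) = ⊤ := Submodule.eq_top_iff'.2 hcon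
  have h1 : Module.rank ℝ H ≤ #({x, y} : Set H) := by
    conv_lhs => rw [← rank_top ℝ H, ← htop]
    exact rank_span_le _
  have h2 : #({x, y} : Set H) ≤ 2 := by
    calc #({x, y} : Set H) ≤ #({y} : Set H) + 1 := Cardinal.mk_insert_le
      _ = 2 := by rw [Cardinal.mk_singleton]; norm_num
  have : (3 : Cardinal) ≤ 2 := hdim.trans (h1.trans h2)
  norm_num at this


lemma key (hdim : 3 ≤ Module.rank ℝ H) (C₀ C₁ : H →L[ℝ] H) (x y : H)
    (h0x : Q C₀ x = 0) (h0y : Q C₀ y = 0) (h1x : 0 < Q C₁ x) (h1y : Q C₁ y < 0) :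
    ∃ z : H, z ≠ 0 ∧ Q C₀ z = 0 ∧ Q C₁ z = 0 := by
  have hxne : x ≠ 0 := by rintro rfl; rw [Q_zero] at h1x; linarith
  have indep : ∀ a b : ℝ, a • x + b • y = 0 → a = 0 ∧ b = 0 := by
    intro a b hab
    rcases eq_or_ne b 0 with hb | hb
    · subst hb
      simp only [zero_smul, add_zero] at hab
      rcases smul_eq_zero.1 hab with h | h
      · exact ⟨h, rfl⟩
      · exact absurd h hxne
    · exfalso
      have h1 : b • y = -(a • x) := by
        rw [add_comm] at hab; exact eq_neg_of_add_eq_zero_left hab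
      have hy' : y = (-(b⁻¹ * a)) • x := by
        have := congrArg (fun v : H => b⁻¹ • v) h1
        simpa [smul_smul, inv_smul_smul₀ hb, neg_smul, smul_neg] using this
      have hQ : Q C₁ y = (-(b⁻¹ * a)) ^ 2 * Q C₁ x := by rw [hy', Q_smul]
      nlinarith [sq_nonneg (b⁻¹ * a)]
  rcases eq_or_ne (Bl C₀ x y) 0 with hB | hB
  · -- straight segment from x to y
    apply ivt_zero C₀ C₁ (fun t => (1 - t) • x + t • y) (by fun_prop)
    · intro t _
      rw [Q_expand2, h0x, h0y, hB]; ring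
    · intro t _ h
      obtain ⟨h1, h2⟩ := indep _ _ h
      linarith
    · norm_num
      simpa using h1x
    · norm_num
      simpa using h1y
  · obtain ⟨v₀, hv₀⟩ := exists_not_mem_span hdim x y
    set Bv := Bl C₀ x y with hBv
    set k₁ : ℝ := Bl C₀ y v₀ / Bv with hk₁
    set k₂ : ℝ := Bl C₀ x v₀ / Bv with hk₂
    set w : H := v₀ - k₁ • x - k₂ • y with hw
    have hxw : Bl C₀ x w = 0 := by
      rw [hw, Bl_sub_right, Bl_sub_right, Bl_smul_right, Bl_smul_right, Bl_self, h0x, hk₂]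
      field_simp
      rw [← hBv]; ring
    have hyw : Bl C₀ y w = 0 := by
      rw [hw, Bl_sub_right, Bl_sub_right, Bl_smul_right, Bl_smul_right, Bl_self, h0y,
        Bl_comm C₀ y x, ← hBv, hk₁]
      field_simp
      ring
    have indep3 : ∀ a b c : ℝ, a • x + b • y + c • w = 0 → a = 0 ∧ b = 0 ∧ c = 0 := by
      intro a b c habc
      have hc : c = 0 := by
        by_contra hc
        apply hv₀
        have h2 : c • v₀ = (c * k₁ - a) • x + (c * k₂ - b) • y := by
          rw [hw] at habc
          linear_combination (norm := module) habc
        have hv : v₀ = c⁻¹ • ((c * k₁ - a) • x + (c * k₂ - b) • y) := by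
          rw [← h2, inv_smul_smul₀ hc]
        rw [hv]
        exact Submodule.smul_mem _ _ (Submodule.add_mem _
          (Submodule.smul_mem _ _ (Submodule.subset_span (Set.mem_insert _ _)))
          (Submodule.smul_mem _ _ (Submodule.subset_span (Set.mem_insert_of_mem _ rfl))))
      subst hc
      simp only [zero_smul, add_zero] at habc
      obtain ⟨ha, hb2⟩ := indep _ _ habc
      exact ⟨ha, hb2, rfl⟩
    have wne : w ≠ 0 := by
      intro h
      have := indep3 0 0 1 (by simp [h])
      exact one_ne_zero this.2.2
    rcases eq_or_ne (Q C₀ w) 0 with hγ | hγ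
    · rcases lt_trichotomy (Q C₁ w) 0 with hw1 | hw1 | hw1
      · -- straight segment from x to w
        apply ivt_zero C₀ C₁ (fun t => (1 - t) • x + t • w) (by fun_prop)
        · intro t _
          rw [Q_expand2, h0x, hγ, hxw]; ring
        · intro t _ h
          have h' : (1 - t) • x + (0:ℝ) • y + t • w = 0 := by simpa using h
          obtain ⟨h1, _, h3⟩ := indep3 _ _ _ h'
          linarith
        · norm_num
          simpa using h1x
        · norm_num
          simpa using hw1
      · exact ⟨w, wne, hγ, hw1⟩
      · -- straight segment from w to y
        apply ivt_zero C₀ C₁ (fun t => (1 - t) • w + t • y) (by fun_prop)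
        · intro t _
          rw [Q_expand2, hγ, h0y, Bl_comm C₀ w y, hyw]; ring
        · intro t _ h
          have h' : (0:ℝ) • x + t • y + (1 - t) • w = 0 := by
            rw [zero_smul, zero_add, add_comm]; exact h
          obtain ⟨_, h2, h3⟩ := indep3 _ _ _ h'
          linarith
        · norm_num
          simpa using hw1
        · norm_num
          simpa using h1y
    · -- the genuinely three-dimensional case
      set γ := Q C₀ w with hγdef
      set m : ℝ := -γ / (2 * Bv) with hm
      have hB2 : (2 : ℝ) * Bv ≠ 0 := by
        simp only [ne_eq, mul_eq_zero]
        push_neg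
        exact ⟨two_ne_zero, hB⟩
      have hm0 : m ≠ 0 := div_ne_zero (neg_ne_zero.2 hγ) hB2
      have hγm : γ = -(2 * Bv * m) := by
        rw [hm]; field_simp
      have hm2 : 0 < m ^ 2 := by
        rcases lt_or_gt_of_ne hm0 with h | h <;> nlinarith
      apply ivt_zero C₀ C₁
        (fun t => (m * (1 - t) ^ 2) • x + (t ^ 2) • y + (t * (1 - t)) • w) (by fun_prop)
      · intro t _
        rw [Q_expand3, h0x, h0y, hxw, hyw]
        linear_combination (t * (1 - t)) ^ 2 * hγm
      · intro t _ h
        obtain ⟨h1, h2, _⟩ := indep3 _ _ _ h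
        have ht0 : t = 0 := by
          have := pow_eq_zero_iff (n := 2) two_ne_zero |>.1 h2
          exact this
        subst ht0
        simp only [sub_zero, one_pow, mul_one] at h1
        exact hm0 h1
      · have e0 : (m * ((1:ℝ) - 0) ^ 2) • x + ((0:ℝ) ^ 2) • y + ((0:ℝ) * (1 - 0)) • w
            = m • x := by norm_num
        simp only [e0]
        rw [Q_smul]
        exact mul_pos hm2 h1x
      · have e1 : (m * ((1:ℝ) - 1) ^ 2) • x + ((1:ℝ) ^ 2) • y + ((1:ℝ) * (1 - 1)) • w
            = y := by norm_num
        simp only [e1]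
        exact h1y


lemma sphere_convex (hdim : 3 ≤ Module.rank ℝ H)
    (A₀ A₁ A₂ : H →L[ℝ] H) (μ₁ μ₂ : ℝ)
    (hpos : ∀ v : H, v ≠ 0 → 0 < Q (μ₁ • A₁ + μ₂ • A₂) v)
    (x y : H) (σ : ℝ) (hσ0 : 0 ≤ σ) (hσ1 : σ ≤ 1)
    (hx : Q (μ₁ • A₁ + μ₂ • A₂) x = 1) (hy : Q (μ₁ • A₁ + μ₂ • A₂) y = 1) :
    ∃ z : H, Q A₀ z = σ * Q A₀ x + (1 - σ) * Q A₀ y ∧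
      Q A₁ z = σ * Q A₁ x + (1 - σ) * Q A₁ y ∧
      Q A₂ z = σ * Q A₂ x + (1 - σ) * Q A₂ y := by
  set B := μ₁ • A₁ + μ₂ • A₂ with hBdef
  have hQB : ∀ v : H, Q B v = μ₁ * Q A₁ v + μ₂ * Q A₂ v := by
    intro v; rw [hBdef, Q_add_op, Q_smul_op, Q_smul_op]
  have hBx1 : μ₁ * Q A₁ x + μ₂ * Q A₂ x = 1 := by rw [← hQB x]; exact hx
  have hBy1 : μ₁ * Q A₁ y + μ₂ * Q A₂ y = 1 := by rw [← hQB y]; exact hy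
  have hμ : μ₁ ^ 2 + μ₂ ^ 2 ≠ 0 := by
    intro h
    have h1 : μ₁ = 0 := by nlinarith [sq_nonneg μ₁, sq_nonneg μ₂]
    have h2 : μ₂ = 0 := by nlinarith [sq_nonneg μ₁, sq_nonneg μ₂]
    rw [h1, h2] at hBx1
    norm_num at hBx1
  set A' := μ₂ • A₁ - μ₁ • A₂ with hA'def
  have hQ' : ∀ v : H, Q A' v = μ₂ * Q A₁ v - μ₁ * Q A₂ v := by
    intro v; rw [hA'def, Q_sub_op, Q_smul_op, Q_smul_op]
  by_cases hσz : σ = 0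
  · subst hσz
    exact ⟨y, by ring_nf, by ring_nf, by ring_nf⟩
  by_cases hσo : σ = 1
  · subst hσo
    exact ⟨x, by ring_nf, by ring_nf, by ring_nf⟩
  have hσpos : 0 < σ := lt_of_le_of_ne hσ0 (Ne.symm hσz)
  have hσlt : σ < 1 := lt_of_le_of_ne hσ1 hσo
  set e₀ : ℝ := Q A₀ x - Q A₀ y with he₀
  set e' : ℝ := Q A' x - Q A' y with he'
  by_cases he : e₀ = 0 ∧ e' = 0
  · -- the two images coincide
    obtain ⟨hez, hez'⟩ := he
    have h3 : μ₂ * Q A₁ x - μ₁ * Q A₂ x = μ₂ * Q A₁ y - μ₁ * Q A₂ y := by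
      have := hez'
      rw [he'] at this
      rw [← hQ' x, ← hQ' y]
      linarith
    have hA1 : Q A₁ x = Q A₁ y := by
      have h4 : (μ₁ ^ 2 + μ₂ ^ 2) * (Q A₁ x - Q A₁ y) = 0 := by
        linear_combination μ₁ * hBx1 - μ₁ * hBy1 + μ₂ * h3
      rcases mul_eq_zero.1 h4 with h | h
      · exact absurd h hμ
      · linarith
    have hA2 : Q A₂ x = Q A₂ y := by
      have h4 : (μ₁ ^ 2 + μ₂ ^ 2) * (Q A₂ x - Q A₂ y) = 0 := by
        linear_combination μ₂ * hBx1 - μ₂ * hBy1 - μ₁ * h3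
      rcases mul_eq_zero.1 h4 with h | h
      · exact absurd h hμ
      · linarith
    have hA0 : Q A₀ x = Q A₀ y := by
      have := hez; rw [he₀] at this; linarith
    exact ⟨x, by linear_combination (1 - σ) * hA0, by linear_combination (1 - σ) * hA1,
      by linear_combination (1 - σ) * hA2⟩
  · have hee : 0 < e₀ ^ 2 + e' ^ 2 := by
      rcases not_and_or.1 he with h | h
      · have : 0 < e₀ ^ 2 := by rcases lt_or_gt_of_ne h with hh | hh <;> nlinarith
        nlinarith [sq_nonneg e']
      · have : 0 < e' ^ 2 := by rcases lt_or_gt_of_ne h with hh | hh <;> nlinarith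
        nlinarith [sq_nonneg e₀]
    set c₀ : ℝ := σ * Q A₀ x + (1 - σ) * Q A₀ y with hc₀
    set c' : ℝ := σ * Q A' x + (1 - σ) * Q A' y with hc'
    set C₀op : H →L[ℝ] H := e' • (A₀ - c₀ • B) - e₀ • (A' - c' • B) with hC₀op
    set C₁op : H →L[ℝ] H := e₀ • (A₀ - c₀ • B) + e' • (A' - c' • B) with hC₁op
    have hQC₀ : ∀ v : H, Q C₀op v
        = e' * (Q A₀ v - c₀ * Q B v) - e₀ * (Q A' v - c' * Q B v) := by
      intro v
      rw [hC₀op]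
      simp only [Q_sub_op, Q_smul_op]
    have hQC₁ : ∀ v : H, Q C₁op v
        = e₀ * (Q A₀ v - c₀ * Q B v) + e' * (Q A' v - c' * Q B v) := by
      intro v
      rw [hC₁op]
      simp only [Q_add_op, Q_sub_op, Q_smul_op]
    have h0x' : Q C₀op x = 0 := by
      rw [hQC₀ x, hx, hc₀, hc', he₀, he']; ring
    have h0y' : Q C₀op y = 0 := by
      rw [hQC₀ y, hy, hc₀, hc', he₀, he']; ring
    have h1x' : 0 < Q C₁op x := by
      have hval : Q C₁op x = (1 - σ) * (e₀ ^ 2 + e' ^ 2) := by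
        rw [hQC₁ x, hx, hc₀, hc', he₀, he']; ring
      rw [hval]
      exact mul_pos (by linarith) hee
    have h1y' : Q C₁op y < 0 := by
      have hval : Q C₁op y = -(σ * (e₀ ^ 2 + e' ^ 2)) := by
        rw [hQC₁ y, hy, hc₀, hc', he₀, he']; ring
      rw [hval]
      exact neg_neg_iff_pos.2 (mul_pos hσpos hee)
    obtain ⟨z₁, hz₁ne, hz₁0, hz₁1⟩ := key hdim C₀op C₁op x y h0x' h0y' h1x' h1y'
    rw [hQC₀ z₁] at hz₁0
    rw [hQC₁ z₁] at hz₁1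
    set P : ℝ := Q B z₁ with hPdef
    have hPpos : 0 < P := hpos z₁ hz₁ne
    have hd₀ : (e₀ ^ 2 + e' ^ 2) * (Q A₀ z₁ - c₀ * P) = 0 := by
      linear_combination e' * hz₁0 + e₀ * hz₁1
    have hd' : (e₀ ^ 2 + e' ^ 2) * (Q A' z₁ - c' * P) = 0 := by
      linear_combination (-e₀) * hz₁0 + e' * hz₁1
    have hA₀z : Q A₀ z₁ = c₀ * P := by
      rcases mul_eq_zero.1 hd₀ with h | h
      · exact absurd h hee.ne'
      · linarith
    have hA'z : Q A' z₁ = c' * P := by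
      rcases mul_eq_zero.1 hd' with h | h
      · exact absurd h hee.ne'
      · linarith
    have E1 : μ₁ * Q A₁ z₁ + μ₂ * Q A₂ z₁ = P := by rw [← hQB z₁]
    have E2 : μ₂ * Q A₁ z₁ - μ₁ * Q A₂ z₁
        = (σ * (μ₂ * Q A₁ x - μ₁ * Q A₂ x) + (1 - σ) * (μ₂ * Q A₁ y - μ₁ * Q A₂ y)) * P := by
      rw [← hQ' z₁, ← hQ' x, ← hQ' y, hA'z, hc']
    have hd₁ : (μ₁ ^ 2 + μ₂ ^ 2) * (Q A₁ z₁ - (σ * Q A₁ x + (1 - σ) * Q A₁ y) * P) = 0 := by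
      linear_combination μ₁ * E1 + μ₂ * E2 - (P * σ * μ₁) * hBx1 - (P * (1 - σ) * μ₁) * hBy1
    have hd₂ : (μ₁ ^ 2 + μ₂ ^ 2) * (Q A₂ z₁ - (σ * Q A₂ x + (1 - σ) * Q A₂ y) * P) = 0 := by
      linear_combination μ₂ * E1 - μ₁ * E2 - (P * σ * μ₂) * hBx1 - (P * (1 - σ) * μ₂) * hBy1
    have hA₁z : Q A₁ z₁ = (σ * Q A₁ x + (1 - σ) * Q A₁ y) * P := by
      rcases mul_eq_zero.1 hd₁ with h | h
      · exact absurd h hμ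
      · linarith
    have hA₂z : Q A₂ z₁ = (σ * Q A₂ x + (1 - σ) * Q A₂ y) * P := by
      rcases mul_eq_zero.1 hd₂ with h | h
      · exact absurd h hμ
      · linarith
    have hzsq : ((Real.sqrt P)⁻¹) ^ 2 = P⁻¹ := by
      rw [inv_pow, Real.sq_sqrt hPpos.le]
    refine ⟨(Real.sqrt P)⁻¹ • z₁, ?_, ?_, ?_⟩
    · rw [Q_smul, hzsq, hA₀z, hc₀]
      field_simp
    · rw [Q_smul, hzsq, hA₁z]
      field_simp
    · rw [Q_smul, hzsq, hA₂z]
      field_simp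


lemma Q_eq (A : H →L[ℝ] H) (x : H) : Q A x = ⟪A x, x⟫ := rfl

lemma range_convex (hdim : 3 ≤ Module.rank ℝ H)
    (A₀ A₁ A₂ : H →L[ℝ] H) (μ₁ μ₂ : ℝ)
    (hpos : ∀ v : H, v ≠ 0 → 0 < Q (μ₁ • A₁ + μ₂ • A₂) v) :
    Convex ℝ {v : ℝ × ℝ × ℝ | ∃ x : H, v = (Q A₀ x, Q A₁ x, Q A₂ x)} := by
  set B := μ₁ • A₁ + μ₂ • A₂ with hBdef
  rintro u ⟨x, rfl⟩ v ⟨y, rfl⟩ a b ha hb hab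
  simp only [Set.mem_setOf_eq, Prod.smul_mk, Prod.mk_add_mk, smul_eq_mul, Prod.mk.injEq]
  by_cases haz : a = 0
  · have hb1 : b = 1 := by linarith
    subst haz; subst hb1
    exact ⟨y, by norm_num⟩
  by_cases hbz : b = 0
  · have ha1 : a = 1 := by linarith
    subst hbz; subst ha1
    exact ⟨x, by norm_num⟩
  have ha' : 0 < a := lt_of_le_of_ne ha (Ne.symm haz)
  have hb' : 0 < b := lt_of_le_of_ne hb (Ne.symm hbz)
  by_cases hxz : x = 0
  · refine ⟨Real.sqrt b • y, ?_, ?_, ?_⟩ <;>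
      rw [Q_smul, Real.sq_sqrt hb, hxz, Q_zero] <;> ring
  by_cases hyz : y = 0
  · refine ⟨Real.sqrt a • x, ?_, ?_, ?_⟩ <;>
      rw [Q_smul, Real.sq_sqrt ha, hyz, Q_zero] <;> ring
  have hpx : 0 < Q B x := hpos x hxz
  have hpy : 0 < Q B y := hpos y hyz
  have hT : 0 < a * Q B x + b * Q B y :=
    add_pos (mul_pos ha' hpx) (mul_pos hb' hpy)
  have hσ0 : 0 ≤ a * Q B x / (a * Q B x + b * Q B y) :=
    div_nonneg (mul_pos ha' hpx).le hT.le
  have hσ1 : a * Q B x / (a * Q B x + b * Q B y) ≤ 1 := by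
    rw [div_le_one hT]
    nlinarith [mul_pos hb' hpy]
  have hx'1 : Q B ((Real.sqrt (Q B x))⁻¹ • x) = 1 := by
    rw [Q_smul, inv_pow, Real.sq_sqrt hpx.le]
    field_simp
  have hy'1 : Q B ((Real.sqrt (Q B y))⁻¹ • y) = 1 := by
    rw [Q_smul, inv_pow, Real.sq_sqrt hpy.le]
    field_simp
  obtain ⟨z, hz0, hz1, hz2⟩ := sphere_convex hdim A₀ A₁ A₂ μ₁ μ₂ hpos
    ((Real.sqrt (Q B x))⁻¹ • x) ((Real.sqrt (Q B y))⁻¹ • y)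
    (a * Q B x / (a * Q B x + b * Q B y)) hσ0 hσ1 hx'1 hy'1
  refine ⟨Real.sqrt (a * Q B x + b * Q B y) • z, ?_, ?_, ?_⟩
  · rw [Q_smul, Real.sq_sqrt hT.le, hz0, Q_smul, Q_smul, inv_pow, inv_pow,
      Real.sq_sqrt hpx.le, Real.sq_sqrt hpy.le]
    field_simp
    ring
  · rw [Q_smul, Real.sq_sqrt hT.le, hz1, Q_smul, Q_smul, inv_pow, inv_pow,
      Real.sq_sqrt hpx.le, Real.sq_sqrt hpy.le]
    field_simp
    ring
  · rw [Q_smul, Real.sq_sqrt hT.le, hz2, Q_smul, Q_smul, inv_pow, inv_pow,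
      Real.sq_sqrt hpx.le, Real.sq_sqrt hpy.le]
    field_simp
    ring

lemma homogenize (A₀ A₁ A₂ : H →L[ℝ] H) (τ₁ τ₂ δ : ℝ)
    (hkey : ∀ x : H, Q A₀ x - τ₁ * Q A₁ x - τ₂ * Q A₂ x ≤ δ) :
    ∀ x : H, Q A₀ x ≤ τ₁ * Q A₁ x + τ₂ * Q A₂ x := by
  intro x
  by_contra hcon
  push_neg at hcon
  have hEpos : 0 < Q A₀ x - τ₁ * Q A₁ x - τ₂ * Q A₂ x := by linarith
  have hs0 : 0 ≤ max δ 0 / (Q A₀ x - τ₁ * Q A₁ x - τ₂ * Q A₂ x) + 1 := by positivity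
  have h1 := hkey (Real.sqrt (max δ 0 / (Q A₀ x - τ₁ * Q A₁ x - τ₂ * Q A₂ x) + 1) • x)
  rw [Q_smul, Q_smul, Q_smul, Real.sq_sqrt hs0] at h1
  have h3 : (max δ 0 / (Q A₀ x - τ₁ * Q A₁ x - τ₂ * Q A₂ x) + 1) *
      (Q A₀ x - τ₁ * Q A₁ x - τ₂ * Q A₂ x)
      = max δ 0 + (Q A₀ x - τ₁ * Q A₁ x - τ₂ * Q A₂ x) := by
    field_simp
  nlinarith [le_max_left δ 0, h1, h3, hEpos]

end SProcAux

open SProcAux in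
set_option maxHeartbeats 1000000 in
/-- S-procedure on a real Hilbert space of dimension at least 3. -/
theorem s_procedure
    {H : Type*} [NormedAddCommGroup H] [InnerProductSpace ℝ H] [CompleteSpace H]
    (hdim : 3 ≤ Module.rank ℝ H)
    (A₀ A₁ A₂ : H →L[ℝ] H) (α₀ α₁ α₂ : ℝ) (μ₁ μ₂ : ℝ)
    (hsymm : ∀ x y : H, ⟪(μ₁ • A₁ + μ₂ • A₂) x, y⟫ = ⟪x, (μ₁ • A₁ + μ₂ • A₂) y⟫)
    (hpos : ∀ x : H, x ≠ 0 → 0 < ⟪(μ₁ • A₁ + μ₂ • A₂) x, x⟫)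
    (x₀ : H) (hx₁ : ⟪A₁ x₀, x₀⟫ < α₁) (hx₂ : ⟪A₂ x₀, x₀⟫ < α₂) :
    (∀ x : H, ⟪A₁ x, x⟫ ≤ α₁ → ⟪A₂ x, x⟫ ≤ α₂ → ⟪A₀ x, x⟫ ≤ α₀) ↔
    (∃ τ₁ τ₂ : ℝ, 0 ≤ τ₁ ∧ 0 ≤ τ₂ ∧
      (∀ x : H, ⟪A₀ x, x⟫ ≤ τ₁ * ⟪A₁ x, x⟫ + τ₂ * ⟪A₂ x, x⟫) ∧
      τ₁ * α₁ + τ₂ * α₂ ≤ α₀) := by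
  have hpos' : ∀ v : H, v ≠ 0 → 0 < Q (μ₁ • A₁ + μ₂ • A₂) v := hpos
  constructor
  · intro P
    -- the joint range of the three quadratic forms
    set G : Set (ℝ × ℝ × ℝ) := {v | ∃ x : H, v = (Q A₀ x, Q A₁ x, Q A₂ x)} with hGdef
    set C : Set (ℝ × ℝ × ℝ) := {v | α₀ < v.1 ∧ v.2.1 < α₁ ∧ v.2.2 < α₂} with hCdef
    have hGconv : Convex ℝ G := range_convex hdim A₀ A₁ A₂ μ₁ μ₂ hpos'
    have hCopen : IsOpen C := by
      rw [hCdef]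
      exact ((isOpen_lt continuous_const continuous_fst).and
        ((isOpen_lt (continuous_fst.comp continuous_snd) continuous_const).and
          (isOpen_lt (continuous_snd.comp continuous_snd) continuous_const)))
    have hCconv : Convex ℝ C := by
      have hl1 : IsLinearMap ℝ (fun v : ℝ × ℝ × ℝ => v.1) := ⟨fun _ _ => rfl, fun _ _ => rfl⟩
      have hl2 : IsLinearMap ℝ (fun v : ℝ × ℝ × ℝ => v.2.1) := ⟨fun _ _ => rfl, fun _ _ => rfl⟩
      have hl3 : IsLinearMap ℝ (fun v : ℝ × ℝ × ℝ => v.2.2) := ⟨fun _ _ => rfl, fun _ _ => rfl⟩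
      have : C = {v : ℝ × ℝ × ℝ | α₀ < v.1} ∩
          ({v : ℝ × ℝ × ℝ | v.2.1 < α₁} ∩ {v : ℝ × ℝ × ℝ | v.2.2 < α₂}) := rfl
      rw [this]
      exact (convex_halfSpace_gt hl1 α₀).inter
        ((convex_halfSpace_lt hl2 α₁).inter (convex_halfSpace_lt hl3 α₂))
    have hdisj : Disjoint C G := by
      rw [Set.disjoint_left]
      rintro v hv ⟨x, rfl⟩
      have h1 : α₀ < Q A₀ x := hv.1
      have h2 : Q A₁ x < α₁ := hv.2.1
      have h3 : Q A₂ x < α₂ := hv.2.2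
      rw [Q_eq] at h1 h2 h3
      exact absurd (P x h2.le h3.le) (not_le.2 h1)
    obtain ⟨f, u, hfC, hfG⟩ := geometric_hahn_banach_open hCconv hCopen hGconv hdisj
    set c₀ : ℝ := f (1, 0, 0) with hc₀def
    set c₁ : ℝ := f (0, 1, 0) with hc₁def
    set c₂ : ℝ := f (0, 0, 1) with hc₂def
    have hf_eq : ∀ v : ℝ × ℝ × ℝ, f v = v.1 * c₀ + v.2.1 * c₁ + v.2.2 * c₂ := by
      intro v
      have hv : v.1 • ((1:ℝ), (0:ℝ), (0:ℝ)) + v.2.1 • ((0:ℝ), (1:ℝ), (0:ℝ))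
          + v.2.2 • ((0:ℝ), (0:ℝ), (1:ℝ)) = v := by
        simp [Prod.ext_iff]
      rw [← hv, map_add, map_add, map_smul, map_smul, map_smul, hc₀def, hc₁def, hc₂def]
      simp [smul_eq_mul]
    have hq0 : ∀ x : H, u ≤ Q A₀ x * c₀ + Q A₁ x * c₁ + Q A₂ x * c₂ := by
      intro x
      have := hfG (Q A₀ x, Q A₁ x, Q A₂ x) ⟨x, rfl⟩
      rwa [hf_eq] at this
    have hCpt : ∀ d e₁ e₂ : ℝ, 0 < d → 0 < e₁ → 0 < e₂ →
        (α₀ + d) * c₀ + (α₁ - e₁) * c₁ + (α₂ - e₂) * c₂ < u := by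
      intro d e₁ e₂ hd he₁ he₂
      have := hfC (α₀ + d, α₁ - e₁, α₂ - e₂) ⟨by simp; linarith, by simp; linarith,
        by simp; linarith⟩
      rwa [hf_eq] at this
    have hc₀ : c₀ ≤ 0 := by
      by_contra h
      push_neg at h
      have h1 := hCpt 1 1 1 one_pos one_pos one_pos
      have hKlt : 0 < u - (α₀ * c₀ + (α₁ - 1) * c₁ + (α₂ - 1) * c₂) := by nlinarith
      have h2 := hCpt ((u - (α₀ * c₀ + (α₁ - 1) * c₁ + (α₂ - 1) * c₂)) / c₀) 1 1
        (div_pos hKlt h) one_pos one_pos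
      have h3 : ((u - (α₀ * c₀ + (α₁ - 1) * c₁ + (α₂ - 1) * c₂)) / c₀) * c₀
          = u - (α₀ * c₀ + (α₁ - 1) * c₁ + (α₂ - 1) * c₂) := div_mul_cancel₀ _ h.ne'
      nlinarith
    have hc₁ : 0 ≤ c₁ := by
      by_contra h
      push_neg at h
      have h1 := hCpt 1 1 1 one_pos one_pos one_pos
      have hKlt : 0 < u - ((α₀ + 1) * c₀ + α₁ * c₁ + (α₂ - 1) * c₂) := by nlinarith
      have h2 := hCpt 1 ((u - ((α₀ + 1) * c₀ + α₁ * c₁ + (α₂ - 1) * c₂)) / (-c₁)) 1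
        one_pos (div_pos hKlt (by linarith)) one_pos
      have h3 : ((u - ((α₀ + 1) * c₀ + α₁ * c₁ + (α₂ - 1) * c₂)) / (-c₁)) * c₁
          = -(u - ((α₀ + 1) * c₀ + α₁ * c₁ + (α₂ - 1) * c₂)) := by
        rw [div_mul_eq_mul_div, mul_comm, ← div_mul_eq_mul_div, div_neg, div_self h.ne,
          neg_mul, one_mul]
      nlinarith
    have hc₂ : 0 ≤ c₂ := by
      by_contra h
      push_neg at h
      have h1 := hCpt 1 1 1 one_pos one_pos one_pos
      have hKlt : 0 < u - ((α₀ + 1) * c₀ + (α₁ - 1) * c₁ + α₂ * c₂) := by nlinarith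
      have h2 := hCpt 1 1 ((u - ((α₀ + 1) * c₀ + (α₁ - 1) * c₁ + α₂ * c₂)) / (-c₂))
        one_pos one_pos (div_pos hKlt (by linarith))
      have h3 : ((u - ((α₀ + 1) * c₀ + (α₁ - 1) * c₁ + α₂ * c₂)) / (-c₂)) * c₂
          = -(u - ((α₀ + 1) * c₀ + (α₁ - 1) * c₁ + α₂ * c₂)) := by
        rw [div_mul_eq_mul_div, mul_comm, ← div_mul_eq_mul_div, div_neg, div_self h.ne,
          neg_mul, one_mul]
      nlinarith
    have hub : α₀ * c₀ + α₁ * c₁ + α₂ * c₂ ≤ u := by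
      by_contra h
      push_neg at h
      set L₀ := α₀ * c₀ + α₁ * c₁ + α₂ * c₂ with hL₀
      set D := c₀ - c₁ - c₂ with hD
      have hDle : D ≤ 0 := by rw [hD]; linarith
      have hεpos : 0 < (L₀ - u) / (2 * (1 - D)) := div_pos (by linarith) (by linarith)
      have h1 := hCpt ((L₀ - u) / (2 * (1 - D))) ((L₀ - u) / (2 * (1 - D)))
        ((L₀ - u) / (2 * (1 - D))) hεpos hεpos hεpos
      have heq : ((L₀ - u) / (2 * (1 - D))) * (2 * (1 - D)) = L₀ - u :=
        div_mul_cancel₀ _ (by nlinarith : (2 : ℝ) * (1 - D) ≠ 0)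
      have hprod : ((L₀ - u) / (2 * (1 - D))) * D ≤ 0 :=
        mul_nonpos_of_nonneg_of_nonpos hεpos.le hDle
      nlinarith [h1, heq, hprod]
    have hc₀neg : c₀ < 0 := by
      rcases hc₀.lt_or_eq with h | h
      · exact h
      · exfalso
        have h1 := hq0 x₀
        have h3 := hCpt 1 1 1 one_pos one_pos one_pos
        have hq₁ : Q A₁ x₀ < α₁ := hx₁
        have hq₂ : Q A₂ x₀ < α₂ := hx₂
        have e1 : Q A₀ x₀ * c₀ = 0 := by rw [h]; ring
        have e3 : (α₀ + 1) * c₀ = 0 := by rw [h]; ring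
        have e4 : α₀ * c₀ = 0 := by rw [h]; ring
        have hp1 : Q A₁ x₀ * c₁ ≤ α₁ * c₁ := mul_le_mul_of_nonneg_right hq₁.le hc₁
        have hp2 : Q A₂ x₀ * c₂ ≤ α₂ * c₂ := mul_le_mul_of_nonneg_right hq₂.le hc₂
        have hc12 : 0 < c₁ + c₂ := by nlinarith [h1, h3, e1, e3, hp1, hp2, hub, e4]
        by_cases hcc : 0 < c₁
        · have hstr : Q A₁ x₀ * c₁ < α₁ * c₁ := mul_lt_mul_of_pos_right hq₁ hcc
          nlinarith [h1, hub, e1, e4, hstr, hp2]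
        · have hcc₂ : 0 < c₂ := by
            rcases hc₁.lt_or_eq with h' | h'
            · exact absurd h' hcc
            · linarith
          have hstr : Q A₂ x₀ * c₂ < α₂ * c₂ := mul_lt_mul_of_pos_right hq₂ hcc₂
          nlinarith [h1, hub, e1, e4, hstr, hp1]
    have hc₀ne : -c₀ ≠ 0 := ne_of_gt (by linarith : (0:ℝ) < -c₀)
    have hc₁e : c₁ = (c₁ / (-c₀)) * (-c₀) := (div_mul_cancel₀ c₁ hc₀ne).symm
    have hc₂e : c₂ = (c₂ / (-c₀)) * (-c₀) := (div_mul_cancel₀ c₂ hc₀ne).symm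
    have hkey : ∀ x : H, Q A₀ x - (c₁ / (-c₀)) * Q A₁ x - (c₂ / (-c₀)) * Q A₂ x ≤
        α₀ - (c₁ / (-c₀)) * α₁ - (c₂ / (-c₀)) * α₂ := by
      intro x
      have ha : α₀ * c₀ + α₁ * c₁ + α₂ * c₂ ≤
          Q A₀ x * c₀ + Q A₁ x * c₁ + Q A₂ x * c₂ := hub.trans (hq0 x)
      have hd : 0 < -c₀ := by linarith
      rw [hc₁e, hc₂e] at ha
      apply le_of_mul_le_mul_right _ hd
      linarith [ha]
    refine ⟨c₁ / (-c₀), c₂ / (-c₀), div_nonneg hc₁ (by linarith), div_nonneg hc₂ (by linarith),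
      ?_, ?_⟩
    · -- the operator inequality
      have hhom := homogenize A₀ A₁ A₂ (c₁ / (-c₀)) (c₂ / (-c₀))
        (α₀ - (c₁ / (-c₀)) * α₁ - (c₂ / (-c₀)) * α₂) hkey
      intro x
      have := hhom x
      rw [Q_eq, Q_eq, Q_eq] at this
      exact this
    · have h0 := hkey 0
      rw [Q_zero, Q_zero, Q_zero] at h0
      linarith
  · rintro ⟨τ₁, τ₂, ht₁, ht₂, hop, hα⟩ x h1 h2
    have h3 := hop x
    nlinarith [mul_le_mul_of_nonneg_left h1 ht₁, mul_le_mul_of_nonneg_left h2 ht₂]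
end
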